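/- arXiv:1910.13419 — 4 statements merged into one kernel-verified Lean document; each statement's English description precedes it below -/
import Mathlib

section
/- Let n ≥ 1 be an integer. Then for every α ∈ (0,1) one has μ_{n,α}/(1−α) ≤ π^{−n/2} √(3/2) · Γ(n/2+1)/Γ(3/2), and moreover lim_{α→1^-} μ_{n,α}/(1−α) = ω_n^{−1}. -/
open MeasureTheory Real Filter Topology Metric
open scoped ENNReal NNReal RealInnerProductSpace

noncomputable section

abbrev En (n : ℕ) : Type := EuclideanSpace ℝ (Fin n)

/-- The normalizing constant `μ_{n,s}`. -/
def mun (n : ℕ) (s : ℝ) : ℝ :=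
  (2 : ℝ) ^ s * Real.pi ^ (-(n : ℝ) / 2) *
    Real.Gamma (((n : ℝ) + s + 1) / 2) / Real.Gamma ((1 - s) / 2)

/-- The volume of the unit ball in `ℝ^n`. -/
def omegan (n : ℕ) : ℝ := Real.pi ^ ((n : ℝ) / 2) / Real.Gamma ((n : ℝ) / 2 + 1)

/-- The fractional `s`-divergence. -/
def fracDiv (n : ℕ) (s : ℝ) (φ : En n → En n) (x : En n) : ℝ :=
  mun n s * ∫ y : En n, ⟪y - x, φ y - φ x⟫ / ‖y - x‖ ^ ((n : ℝ) + s + 1)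

/-- The fractional `s`-gradient. -/
def fracGrad (n : ℕ) (s : ℝ) (f : En n → ℝ) (x : En n) : En n :=
  mun n s • ∫ y : En n, ((f y - f x) / ‖y - x‖ ^ ((n : ℝ) + s + 1)) • (y - x)

/-- The classical divergence. -/
def cdiv (n : ℕ) (φ : En n → En n) (x : En n) : ℝ :=
  ∑ i : Fin n, fderiv ℝ φ x (EuclideanSpace.single i 1) i

/-- The fractional `s`-variation of `f` on an open set `Ω`. -/
def fvar (n : ℕ) (s : ℝ) (f : En n → ℝ) (Ω : Set (En n)) : ℝ≥0∞ :=
  ⨆ φ : {φ : En n → En n //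
      ContDiff ℝ (⊤ : ℕ∞) φ ∧ HasCompactSupport φ ∧ tsupport φ ⊆ Ω ∧ ∀ x, ‖φ x‖ ≤ 1},
    ENNReal.ofReal (∫ x, f x * fracDiv n s φ.1 x)

/-- De Giorgi's variation of `f` on an open set `Ω`. -/
def cvar (n : ℕ) (f : En n → ℝ) (Ω : Set (En n)) : ℝ≥0∞ :=
  ⨆ φ : {φ : En n → En n //
      ContDiff ℝ (⊤ : ℕ∞) φ ∧ HasCompactSupport φ ∧ tsupport φ ⊆ Ω ∧ ∀ x, ‖φ x‖ ≤ 1},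
    ENNReal.ofReal (∫ x, f x * cdiv n φ.1 x)

private lemma gamma_upper0 {x s : ℝ} (hx : 0 < x) (hs0 : 0 < s) (hs1 : s < 1) :
    Real.Gamma (x + s) ≤ Real.Gamma (x + 1) * x ^ (s - 1) := by
  have hΓ1 : 0 < Real.Gamma (x + 1) := Real.Gamma_pos_of_pos (by linarith)
  have h := Real.Gamma_mul_add_mul_le_rpow_Gamma_mul_rpow_Gamma
    (s := x + 1) (t := x) (a := s) (b := 1 - s) (by positivity) hx hs0 (by linarith) (by ring)
  have harg : s * (x + 1) + (1 - s) * x = x + s := by ring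
  rw [harg] at h
  have hΓx : Real.Gamma x = Real.Gamma (x + 1) / x := by
    rw [Real.Gamma_add_one hx.ne']; field_simp
  rw [hΓx] at h
  calc Real.Gamma (x + s) ≤ Real.Gamma (x+1) ^ s * (Real.Gamma (x+1) / x) ^ (1 - s) := h
    _ = (Real.Gamma (x+1) ^ s * Real.Gamma (x+1) ^ (1-s)) * (x ^ (1-s))⁻¹ := by
        rw [Real.div_rpow hΓ1.le hx.le]; ring
    _ = Real.Gamma (x+1) * x ^ (s - 1) := by
        rw [← Real.rpow_add hΓ1, ← Real.rpow_neg hx.le,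
          show s + (1 - s) = 1 by ring, Real.rpow_one, show -(1 - s) = s - 1 by ring]

private lemma gamma_lower0 {x s : ℝ} (hx : 0 < x) (hs0 : 0 < s) (hs1 : s < 1) :
    Real.Gamma (x + 1) ≤ Real.Gamma (x + s) * (x + s) ^ (1 - s) := by
  have hxs : 0 < x + s := by linarith
  have hΓ : 0 < Real.Gamma (x + s) := Real.Gamma_pos_of_pos hxs
  have h := Real.Gamma_mul_add_mul_le_rpow_Gamma_mul_rpow_Gamma
    (s := x + s) (t := x + s + 1) (a := s) (b := 1 - s) hxs (by linarith) hs0 (by linarith) (by ring)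
  have harg : s * (x + s) + (1 - s) * (x + s + 1) = x + 1 := by ring
  rw [harg, Real.Gamma_add_one hxs.ne'] at h
  calc Real.Gamma (x + 1)
      ≤ Real.Gamma (x+s) ^ s * ((x+s) * Real.Gamma (x+s)) ^ (1-s) := h
    _ = (Real.Gamma (x+s) ^ s * Real.Gamma (x+s) ^ (1-s)) * (x+s) ^ (1-s) := by
        rw [Real.mul_rpow hxs.le hΓ.le]; ring
    _ = Real.Gamma (x + s) * (x + s) ^ (1 - s) := by
        rw [← Real.rpow_add hΓ, show s + (1 - s) = 1 by ring, Real.rpow_one]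

private lemma mun_div0 (n : ℕ) {α : ℝ} (h0 : 0 < α) (h1 : α < 1) :
    mun n α / (1 - α) =
      (2 : ℝ) ^ (α - 1) * Real.pi ^ (-(n : ℝ) / 2) *
        Real.Gamma (((n : ℝ) + α + 1) / 2) / Real.Gamma ((3 - α) / 2) := by
  have hx : (0:ℝ) < (1 - α) / 2 := by linarith
  have hΓb : 0 < Real.Gamma ((3 - α) / 2) := Real.Gamma_pos_of_pos (by linarith)
  have hΓ : Real.Gamma ((1 - α) / 2) = Real.Gamma ((3 - α) / 2) / ((1 - α) / 2) := by
    have h := Real.Gamma_add_one hx.ne'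
    rw [show (1 - α) / 2 + 1 = (3 - α) / 2 by ring] at h
    rw [h, mul_comm, mul_div_assoc, div_self hx.ne', mul_one]
  have h2 : (2:ℝ) ^ (α - 1) = (2:ℝ) ^ α / 2 := by
    rw [Real.rpow_sub two_pos, Real.rpow_one]
  have h2pos : (0:ℝ) < (2:ℝ) ^ α := Real.rpow_pos_of_pos two_pos _
  rw [mun, hΓ, h2]
  have h1α : (1:ℝ) - α ≠ 0 := by linarith
  field_simp

/-- For every `α ∈ (0,1)` one has
`μ_{n,α}/(1−α) ≤ π^{−n/2} √(3/2) Γ(n/2+1)/Γ(3/2)`, and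
`μ_{n,α}/(1−α) → ω_n⁻¹` as `α → 1⁻`. -/
theorem stmt0 (n : ℕ) (hn : 1 ≤ n) :
    (∀ α ∈ Set.Ioo (0 : ℝ) 1,
      mun n α / (1 - α) ≤
        Real.pi ^ (-(n : ℝ) / 2) * Real.sqrt (3 / 2) *
          (Real.Gamma ((n : ℝ) / 2 + 1) / Real.Gamma (3 / 2))) ∧
    Tendsto (fun α : ℝ => mun n α / (1 - α)) (𝓝[<] (1 : ℝ)) (𝓝 (omegan n)⁻¹) := by
  have hn1 : (1:ℝ) ≤ (n:ℝ) := by exact_mod_cast hn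
  have hP : 0 < Real.pi ^ (-(n : ℝ) / 2) := Real.rpow_pos_of_pos Real.pi_pos _
  have hΓn : 0 < Real.Gamma ((n : ℝ) / 2 + 1) := Real.Gamma_pos_of_pos (by positivity)
  have h32 : 0 < Real.Gamma (3 / 2) := Real.Gamma_pos_of_pos (by norm_num)
  constructor
  · rintro α ⟨h0, h1⟩
    rw [mun_div0 n h0 h1]
    have hΓb : 0 < Real.Gamma ((3 - α) / 2) := Real.Gamma_pos_of_pos (by linarith)
    have hΓa : 0 < Real.Gamma (((n : ℝ) + α + 1) / 2) :=
      Real.Gamma_pos_of_pos (by positivity)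
    -- bound on numerator Gamma
    have hA := gamma_upper0 (x := (n:ℝ)/2) (s := (α+1)/2) (by positivity)
      (by linarith) (by linarith)
    rw [show (n:ℝ)/2 + (α+1)/2 = ((n:ℝ) + α + 1)/2 by ring,
      show (α+1)/2 - 1 = (α-1)/2 by ring] at hA
    -- bound on denominator Gamma
    have hB := gamma_lower0 (x := (1:ℝ)/2) (s := 1 - α/2) (by norm_num)
      (by linarith) (by linarith)
    rw [show (1:ℝ)/2 + 1 = 3/2 by norm_num,
      show (1:ℝ)/2 + (1 - α/2) = (3 - α)/2 by ring,
      show 1 - (1 - α/2) = α/2 by ring] at hB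
    -- power bounds
    have hp1 : (2:ℝ)^(α-1) * ((n:ℝ)/2) ^ ((α-1)/2) ≤ 1 := by
      have e1 : ((2:ℝ)*2) ^ ((α-1)/2) = (2:ℝ)^(α-1) := by
        rw [Real.mul_rpow two_pos.le two_pos.le, ← Real.rpow_add two_pos]; ring_nf
      have e2 : (2:ℝ)^(α-1) * ((n:ℝ)/2) ^ ((α-1)/2) = ((2:ℝ)*(n:ℝ)) ^ ((α-1)/2) := by
        rw [← e1, ← Real.mul_rpow (by positivity) (by positivity),
          show (2:ℝ)*2*((n:ℝ)/2) = 2*(n:ℝ) by ring]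
      rw [e2]
      exact Real.rpow_le_one_of_one_le_of_nonpos (by linarith) (by linarith)
    have hp2 : ((3 - α)/2) ^ (α/2) ≤ Real.sqrt (3/2) := by
      have e3 : ((3 - α)/2) ^ (α/2) ≤ ((3:ℝ)/2) ^ (α/2) :=
        Real.rpow_le_rpow (by linarith) (by linarith) (by linarith)
      have e4 : ((3:ℝ)/2) ^ (α/2) ≤ ((3:ℝ)/2) ^ ((1:ℝ)/2) :=
        Real.rpow_le_rpow_of_exponent_le (by norm_num) (by linarith)
      have e5 : ((3:ℝ)/2) ^ ((1:ℝ)/2) = Real.sqrt (3/2) := by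
        rw [Real.sqrt_eq_rpow]
      linarith
    have key : (2:ℝ)^(α-1) * Real.Gamma (((n:ℝ)+α+1)/2) * Real.Gamma (3/2)
        ≤ Real.sqrt (3/2) * (Real.Gamma ((n:ℝ)/2 + 1) * Real.Gamma ((3-α)/2)) := by
      have hpow1 : (0:ℝ) < (2:ℝ)^(α-1) := Real.rpow_pos_of_pos two_pos _
      have hpow2 : (0:ℝ) ≤ ((n:ℝ)/2) ^ ((α-1)/2) := by positivity
      have hpow3 : (0:ℝ) ≤ ((3-α)/2) ^ (α/2) := Real.rpow_nonneg (by linarith) _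
      calc (2:ℝ)^(α-1) * Real.Gamma (((n:ℝ)+α+1)/2) * Real.Gamma (3/2)
          ≤ (2:ℝ)^(α-1) * (Real.Gamma ((n:ℝ)/2+1) * ((n:ℝ)/2)^((α-1)/2)) *
            (Real.Gamma ((3-α)/2) * ((3-α)/2)^(α/2)) := by
            apply mul_le_mul _ hB h32.le (mul_nonneg hpow1.le (mul_nonneg hΓn.le hpow2))
            exact mul_le_mul_of_nonneg_left hA hpow1.le
        _ = ((2:ℝ)^(α-1) * ((n:ℝ)/2)^((α-1)/2)) * ((3-α)/2)^(α/2) *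
            (Real.Gamma ((n:ℝ)/2+1) * Real.Gamma ((3-α)/2)) := by ring
        _ ≤ 1 * Real.sqrt (3/2) * (Real.Gamma ((n:ℝ)/2+1) * Real.Gamma ((3-α)/2)) := by
            apply mul_le_mul_of_nonneg_right _ (by positivity)
            exact mul_le_mul hp1 hp2 hpow3 one_pos.le
        _ = Real.sqrt (3/2) * (Real.Gamma ((n:ℝ)/2+1) * Real.Gamma ((3-α)/2)) := by ring
    rw [mul_div_assoc']
    rw [div_le_div_iff₀ hΓb h32]
    calc (2:ℝ)^(α-1) * Real.pi ^ (-(n:ℝ)/2) * Real.Gamma (((n:ℝ)+α+1)/2) * Real.Gamma (3/2)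
        = Real.pi ^ (-(n:ℝ)/2) *
          ((2:ℝ)^(α-1) * Real.Gamma (((n:ℝ)+α+1)/2) * Real.Gamma (3/2)) := by ring
      _ ≤ Real.pi ^ (-(n:ℝ)/2) *
          (Real.sqrt (3/2) * (Real.Gamma ((n:ℝ)/2+1) * Real.Gamma ((3-α)/2))) :=
          mul_le_mul_of_nonneg_left key hP.le
      _ = Real.pi ^ (-(n:ℝ)/2) * Real.sqrt (3/2) * Real.Gamma ((n:ℝ)/2+1) *
          Real.Gamma ((3-α)/2) := by ring
  · set g : ℝ → ℝ := fun α => (2:ℝ)^(α-1) * Real.pi ^ (-(n:ℝ)/2) *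
      Real.Gamma (((n:ℝ)+α+1)/2) / Real.Gamma ((3-α)/2) with hg
    have heq : g =ᶠ[𝓝[<] (1:ℝ)] fun α => mun n α / (1 - α) := by
      filter_upwards [Ioo_mem_nhdsLT_of_mem
        (show (1:ℝ) ∈ Set.Ioc (0:ℝ) 1 by norm_num)] with α hα
      exact (mun_div0 n hα.1 hα.2).symm
    have hcont : ContinuousAt g 1 := by
      have hc1 : ContinuousAt (fun α : ℝ => (2:ℝ)^(α-1)) 1 := by
        exact (Real.continuousAt_const_rpow (by norm_num : (2:ℝ) ≠ 0)).comp
          (by fun_prop)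
      have hne : ∀ m : ℕ, ((n:ℝ)+1+1)/2 ≠ -(m:ℝ) := by
        intro m
        have hpos : (0:ℝ) < ((n:ℝ)+1+1)/2 := by positivity
        exact (lt_of_le_of_lt (neg_nonpos.mpr m.cast_nonneg) hpos).ne'
      have hin1 : ContinuousAt (fun α : ℝ => ((n:ℝ)+α+1)/2) 1 := by fun_prop
      have hc2 : ContinuousAt (fun α : ℝ => Real.Gamma (((n:ℝ)+α+1)/2)) 1 :=
        ContinuousAt.comp (g := Real.Gamma) (f := fun α : ℝ => ((n:ℝ)+α+1)/2)
          (Real.differentiableAt_Gamma hne).continuousAt hin1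
      have hne2 : ∀ m : ℕ, ((3:ℝ)-1)/2 ≠ -(m:ℝ) := by
        intro m
        have hpos : (0:ℝ) < ((3:ℝ)-1)/2 := by norm_num
        exact (lt_of_le_of_lt (neg_nonpos.mpr m.cast_nonneg) hpos).ne'
      have hin2 : ContinuousAt (fun α : ℝ => ((3:ℝ)-α)/2) 1 := by fun_prop
      have hc3 : ContinuousAt (fun α : ℝ => Real.Gamma ((3-α)/2)) 1 :=
        ContinuousAt.comp (g := Real.Gamma) (f := fun α : ℝ => ((3:ℝ)-α)/2)
          (Real.differentiableAt_Gamma hne2).continuousAt hin2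
      have hne3 : Real.Gamma (((3:ℝ)-1)/2) ≠ 0 := by
        norm_num [Real.Gamma_one]
      exact ((hc1.mul continuousAt_const).mul hc2).div hc3 hne3
    have hg1 : g 1 = (omegan n)⁻¹ := by
      simp only [hg, sub_self, Real.rpow_zero, one_mul,
        show ((n:ℝ)+1+1)/2 = (n:ℝ)/2 + 1 by ring,
        show ((3:ℝ)-1)/2 = 1 by norm_num, Real.Gamma_one, div_one]
      rw [omegan, inv_div, show -(n:ℝ)/2 = -((n:ℝ)/2) by ring,
        Real.rpow_neg Real.pi_pos.le, inv_mul_eq_div]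
    refine Tendsto.congr' heq ?_
    rw [← hg1]
    exact hcont.tendsto.mono_left nhdsWithin_le_nhds
end
end

section
/- Let n ≥ 1, α ∈ (0,1), and let φ : ℝ^n → ℝ^n be bounded and Lipschitz. Then for every x ∈ ℝ^n the integral div^α φ(x) := μ_{n,α} ∫_{ℝ^n} (y−x)·(φ(y)−φ(x))/|y−x|^{n+α+1} dy converges absolutely, and the resulting function satisfies ‖div^α φ‖_{L^∞(ℝ^n)} ≤ (2^{1−α} n ω_n μ_{n,α}/(α(1−α))) · Lip(φ)^α · ‖φ‖_{L^∞(ℝ^n;ℝ^n)}^{1−α}, where Lip(φ) denotes the Lipschitz constant of φ. -/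
open MeasureTheory Real Filter Topology Metric
open scoped ENNReal NNReal RealInnerProductSpace

noncomputable section

section Aux

open Set



lemma integrable_comp_norm_aux {n : ℕ} (hn : 1 ≤ n) {f : ℝ → ℝ}
    (hf : IntegrableOn (fun y : ℝ => f y * y ^ (n - 1)) (Ioi (0 : ℝ))) :
    Integrable (fun x : En n => f ‖x‖) := by
  haveI : Nonempty (Fin n) := ⟨⟨0, hn⟩⟩
  haveI : Nontrivial (En n) := Module.nontrivial_of_finrank_pos
    (R := ℝ) (by rw [finrank_euclideanSpace_fin]; omega)
  have hdim : Module.finrank ℝ (En n) = n := finrank_euclideanSpace_fin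
  have hs : MeasurableSet ({0}ᶜ : Set (En n)) := (measurableSet_singleton 0).compl
  have h5 : Integrable (fun y : Ioi (0 : ℝ) => f y.1 * y.1 ^ (n - 1))
      (volume.comap Subtype.val) := by
    have := ((MeasurableEmbedding.subtype_coe (measurableSet_Ioi (a := (0:ℝ)))).integrable_map_iff
      (g := fun y : ℝ => f y * y ^ (n - 1))
      (μ := volume.comap (Subtype.val : Ioi (0:ℝ) → ℝ)))
    rw [map_comap_subtype_coe measurableSet_Ioi] at this
    exact this.mp hf
  have h4 : Integrable (fun y : Ioi (0 : ℝ) => f y.1)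
      (Measure.volumeIoiPow (n - 1)) := by
    rw [Measure.volumeIoiPow, integrable_withDensity_iff
      (by fun_prop) (ae_of_all _ fun y => ENNReal.ofReal_lt_top)]
    refine h5.congr (ae_of_all _ fun y => ?_)
    show f y.1 * y.1 ^ (n - 1) = f y.1 * (ENNReal.ofReal (y.1 ^ (n - 1))).toReal
    rw [ENNReal.toReal_ofReal (pow_nonneg y.2.le _)]
  have hSne : (volume : Measure (En n)).toSphere univ ≠ 0 := by
    rw [Measure.toSphere_apply_univ]
    refine mul_ne_zero ?_ ?_
    · simp [hdim]; omega
    · exact (measure_ball_pos _ _ one_pos).ne'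
  have hSfin : (volume : Measure (En n)).toSphere univ ≠ ∞ := by
    rw [Measure.toSphere_apply_univ]
    exact ENNReal.mul_ne_top (ENNReal.natCast_ne_top _) measure_ball_lt_top.ne
  have h3 : Integrable (fun p : sphere (0 : En n) 1 × Ioi (0:ℝ) => f p.2.1)
      ((volume : Measure (En n)).toSphere.prod
        (Measure.volumeIoiPow (Module.finrank ℝ (En n) - 1))) := by
    rw [hdim]
    have hmap := Measure.map_snd_prod (μ := (volume : Measure (En n)).toSphere)
      (ν := Measure.volumeIoiPow (n - 1))
    have : Integrable (fun y : Ioi (0:ℝ) => f y.1)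
        (((volume : Measure (En n)).toSphere.prod (Measure.volumeIoiPow (n - 1))).map
          Prod.snd) := by
      rw [hmap]
      exact (integrable_smul_measure hSne hSfin).mpr h4
    exact this.comp_measurable measurable_snd
  have h2 := ((Measure.measurePreserving_homeomorphUnitSphereProd
      (volume : Measure (En n))).integrable_comp_emb
    (Homeomorph.measurableEmbedding _)).mpr h3
  have h1 : Integrable ((fun x : En n => f ‖x‖) ∘ (Subtype.val : ({0}ᶜ : Set (En n)) → En n))
      ((volume : Measure (En n)).comap Subtype.val) := by
    convert h2 using 1
    funext x
    simp
  have := ((MeasurableEmbedding.subtype_coe hs).integrable_map_iff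
    (g := fun x : En n => f ‖x‖)
    (μ := volume.comap (Subtype.val : ({0}ᶜ : Set (En n)) → En n)))
  rw [map_comap_subtype_coe hs, MeasureTheory.restrict_compl_singleton] at this
  exact this.mpr h1

lemma integral_comp_norm_aux {n : ℕ} (hn : 1 ≤ n) (f : ℝ → ℝ) :
    ∫ x : En n, f ‖x‖ = (n : ℝ) * (volume (ball (0 : En n) 1)).toReal *
      ∫ y in Ioi (0:ℝ), f y * y ^ (n - 1) := by
  haveI : Nonempty (Fin n) := ⟨⟨0, hn⟩⟩
  haveI : Nontrivial (En n) := Module.nontrivial_of_finrank_pos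
    (R := ℝ) (by rw [finrank_euclideanSpace_fin]; omega)
  have hdim : Module.finrank ℝ (En n) = n := finrank_euclideanSpace_fin
  rw [integral_fun_norm_addHaar (volume : Measure (En n)) f, hdim]
  rw [nsmul_eq_mul, smul_eq_mul, ← mul_assoc]
  congr 1
  refine setIntegral_congr_fun measurableSet_Ioi fun y _ => ?_
  rw [smul_eq_mul, mul_comm]

end Aux


section StmtOne

open Set

/-- For a bounded Lipschitz field `φ : ℝ^n → ℝ^n`, the integral defining
`div^α φ (x)` converges absolutely at every point, and
`‖div^α φ‖_∞ ≤ (2^{1−α} n ω_n μ_{n,α}/(α(1−α))) Lip(φ)^α ‖φ‖_∞^{1−α}`.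
The Lipschitz constant and the sup-norm are quantified over all admissible bounds `K`, `M`. -/
theorem stmt1 (n : ℕ) (hn : 1 ≤ n) (α : ℝ) (hα : α ∈ Set.Ioo (0 : ℝ) 1)
    (φ : En n → En n) (K : ℝ≥0) (M : ℝ)
    (hK : LipschitzWith K φ) (hM : ∀ x, ‖φ x‖ ≤ M) :
    (∀ x : En n,
      Integrable (fun y : En n => ⟪y - x, φ y - φ x⟫ / ‖y - x‖ ^ ((n : ℝ) + α + 1))) ∧
    (∀ x : En n, |fracDiv n α φ x| ≤
      2 ^ (1 - α) * n * omegan n * mun n α / (α * (1 - α)) * (K : ℝ) ^ α * M ^ (1 - α)) := by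
  obtain ⟨hα0, hα1⟩ := hα
  have hn1 : (1 : ℝ) ≤ (n : ℝ) := by exact_mod_cast hn
  have hM0 : 0 ≤ M := le_trans (norm_nonneg _) (hM 0)
  -- nonnegativity of the constants
  have hmun : 0 ≤ mun n α := by
    unfold mun
    have g1 : 0 < Real.Gamma (((n : ℝ) + α + 1) / 2) := Real.Gamma_pos_of_pos (by positivity)
    have g2 : 0 < Real.Gamma ((1 - α) / 2) := Real.Gamma_pos_of_pos (by linarith)
    have : (0:ℝ) < (2:ℝ) ^ α * Real.pi ^ (-(n : ℝ) / 2) := by positivity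
    positivity
  have homega : 0 ≤ omegan n := by
    unfold omegan
    have g1 : 0 < Real.Gamma ((n : ℝ) / 2 + 1) := Real.Gamma_pos_of_pos (by positivity)
    positivity
  have hRHS : 0 ≤ 2 ^ (1 - α) * n * omegan n * mun n α / (α * (1 - α)) * (K : ℝ) ^ α *
      M ^ (1 - α) := by
    have h1 : (0:ℝ) < α * (1 - α) := by nlinarith
    have h2 : (0:ℝ) ≤ 2 ^ (1 - α) * n * omegan n * mun n α := by positivity
    have := div_nonneg h2 h1.le
    have hKα : (0:ℝ) ≤ (K : ℝ) ^ α := Real.rpow_nonneg K.2 _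
    have hMα : (0:ℝ) ≤ M ^ (1 - α) := Real.rpow_nonneg hM0 _
    positivity
  -- degenerate case: `φ` is constant
  by_cases hdeg : (K : ℝ) = 0 ∨ M = 0
  · have hconst : ∀ x y : En n, φ y - φ x = 0 := by
      rcases hdeg with h | h
      · intro x y
        have := hK.dist_le_mul y x
        rw [h, zero_mul] at this
        rw [sub_eq_zero]
        exact dist_le_zero.mp this
      · intro x y
        have h1 : φ y = 0 := by
          have := hM y; rw [h] at this
          exact norm_le_zero_iff.mp this
        have h2 : φ x = 0 := by
          have := hM x; rw [h] at this
          exact norm_le_zero_iff.mp this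
        rw [h1, h2, sub_zero]
    have hzero : ∀ x : En n, (fun y : En n =>
        ⟪y - x, φ y - φ x⟫ / ‖y - x‖ ^ ((n : ℝ) + α + 1)) = fun _ => (0:ℝ) := by
      intro x
      funext y
      rw [hconst x y, inner_zero_right, zero_div]
    constructor
    · intro x
      rw [hzero x]
      exact integrable_zero _ _ _
    · intro x
      rw [fracDiv, hzero x, integral_zero, mul_zero, abs_zero]
      exact hRHS
  push_neg at hdeg
  have hKpos : (0:ℝ) < (K : ℝ) := lt_of_le_of_ne K.2 (Ne.symm hdeg.1)
  have hMpos : (0:ℝ) < M := lt_of_le_of_ne hM0 (Ne.symm hdeg.2)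
  set r : ℝ := 2 * M / (K : ℝ) with hr_def
  have hr : 0 < r := by positivity
  set f : ℝ → ℝ := fun t =>
    if t ≤ r then (K : ℝ) * t ^ (1 - ((n:ℝ) + α)) else 2 * M * t ^ (-((n:ℝ) + α)) with hf_def
  -- 1D integrability and value
  have heq1 : EqOn (fun y : ℝ => (K:ℝ) * y ^ (-α)) (fun y : ℝ => f y * y ^ (n - 1))
      (Ioc (0:ℝ) r) := by
    intro y hy
    simp only [hf_def, if_pos hy.2]
    rw [← Real.rpow_natCast y (n - 1), Nat.cast_sub hn, Nat.cast_one, mul_assoc,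
      ← Real.rpow_add hy.1]
    congr 2
    ring
  have heq2 : EqOn (fun y : ℝ => 2 * M * y ^ (-1 - α)) (fun y : ℝ => f y * y ^ (n - 1))
      (Ioi r) := by
    intro y hy
    have hy0 : 0 < y := lt_trans hr hy
    simp only [hf_def, if_neg (not_le.mpr (mem_Ioi.mp hy))]
    rw [← Real.rpow_natCast y (n - 1), Nat.cast_sub hn, Nat.cast_one,
      mul_assoc ((2:ℝ) * M), ← Real.rpow_add hy0]
    congr 2
    ring
  have hint1 : IntegrableOn (fun y : ℝ => (K:ℝ) * y ^ (-α)) (Ioc (0:ℝ) r) := by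
    have := intervalIntegral.intervalIntegrable_rpow' (a := 0) (b := r)
      (r := -α) (by linarith)
    rw [intervalIntegrable_iff_integrableOn_Ioc_of_le hr.le] at this
    exact this.const_mul _
  have hint2 : IntegrableOn (fun y : ℝ => 2 * M * y ^ (-1 - α)) (Ioi r) :=
    (integrableOn_Ioi_rpow_of_lt (by linarith) hr).const_mul _
  have h1D : IntegrableOn (fun y : ℝ => f y * y ^ (n - 1)) (Ioi (0:ℝ)) := by
    rw [← Ioc_union_Ioi_eq_Ioi hr.le]
    exact (hint1.congr_fun heq1 measurableSet_Ioc).union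
      (hint2.congr_fun heq2 measurableSet_Ioi)
  have hval : ∫ y in Ioi (0:ℝ), f y * y ^ (n - 1)
      = (K:ℝ) * (r ^ (1 - α) / (1 - α)) + 2 * M * (r ^ (-α) / α) := by
    rw [← Ioc_union_Ioi_eq_Ioi hr.le,
      setIntegral_union (Set.Ioc_disjoint_Ioi le_rfl) measurableSet_Ioi
        (hint1.congr_fun heq1 measurableSet_Ioc) (hint2.congr_fun heq2 measurableSet_Ioi)]
    rw [← setIntegral_congr_fun measurableSet_Ioc heq1,
      ← setIntegral_congr_fun measurableSet_Ioi heq2]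
    rw [MeasureTheory.integral_const_mul, MeasureTheory.integral_const_mul]
    congr 1
    · rw [← intervalIntegral.integral_of_le hr.le,
        integral_rpow (Or.inl (by linarith : (-1:ℝ) < -α)),
        Real.zero_rpow (by linarith : -α + 1 ≠ 0)]
      rw [show -α + 1 = 1 - α by ring]
      ring
    · rw [integral_Ioi_rpow_of_lt (by linarith) hr]
      rw [show (-1:ℝ) - α + 1 = -α by ring]
      field_simp
  -- the radial majorant is integrable
  have hgint : Integrable (fun z : En n => f ‖z‖) := integrable_comp_norm_aux hn h1D
  have htrans : ∀ x : En n, Integrable (fun y : En n => f ‖y - x‖) := by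
    intro x
    have := ((measurePreserving_add_right (volume : Measure (En n)) (-x)).integrable_comp_emb
      (MeasurableEquiv.addRight (-x)).measurableEmbedding
      (g := fun z : En n => f ‖z‖)).mpr hgint
    simpa [Function.comp_def, sub_eq_add_neg] using this
  -- pointwise bound
  have hb : ∀ x y : En n,
      |⟪y - x, φ y - φ x⟫ / ‖y - x‖ ^ ((n:ℝ) + α + 1)| ≤ f ‖y - x‖ := by
    intro x y
    by_cases hz : y - x = 0
    · rw [hz]
      simp only [inner_zero_left, zero_div, abs_zero, norm_zero, hf_def]
      rw [if_pos hr.le, Real.zero_rpow (by nlinarith : (1 - ((n:ℝ) + α)) < 0).ne,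
        mul_zero]
    · have hz0 : 0 < ‖y - x‖ := norm_pos_iff.mpr hz
      have hd : 0 < ‖y - x‖ ^ ((n:ℝ) + α + 1) := Real.rpow_pos_of_pos hz0 _
      rw [abs_div, abs_of_pos hd]
      rcases le_or_gt ‖y - x‖ r with h1 | h1
      · simp only [hf_def, if_pos h1]
        have hnum : |⟪y - x, φ y - φ x⟫| ≤ (K:ℝ) * (‖y - x‖ * ‖y - x‖) := by
          calc |⟪y - x, φ y - φ x⟫| ≤ ‖y - x‖ * ‖φ y - φ x‖ := abs_real_inner_le_norm _ _
            _ ≤ ‖y - x‖ * ((K:ℝ) * ‖y - x‖) := by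
                refine mul_le_mul_of_nonneg_left ?_ (norm_nonneg _)
                have := hK.dist_le_mul y x
                rwa [dist_eq_norm, dist_eq_norm] at this
            _ = (K:ℝ) * (‖y - x‖ * ‖y - x‖) := by ring
        calc |⟪y - x, φ y - φ x⟫| / ‖y - x‖ ^ ((n:ℝ) + α + 1)
            ≤ (K:ℝ) * (‖y - x‖ * ‖y - x‖) / ‖y - x‖ ^ ((n:ℝ) + α + 1) :=
              (div_le_div_iff_of_pos_right hd).mpr hnum
          _ = (K:ℝ) * ‖y - x‖ ^ (1 - ((n:ℝ) + α)) := by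
              rw [mul_div_assoc]
              congr 1
              rw [show (1:ℝ) - ((n:ℝ) + α) = (1:ℝ) + 1 - ((n:ℝ) + α + 1) by ring,
                Real.rpow_sub hz0, Real.rpow_add hz0, Real.rpow_one]
              congr 1
              rw [Real.rpow_add hz0, Real.rpow_one]
      · simp only [hf_def, if_neg (not_le.mpr h1)]
        have hnum : |⟪y - x, φ y - φ x⟫| ≤ ‖y - x‖ * (2 * M) := by
          calc |⟪y - x, φ y - φ x⟫| ≤ ‖y - x‖ * ‖φ y - φ x‖ := abs_real_inner_le_norm _ _
            _ ≤ ‖y - x‖ * (2 * M) := by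
                refine mul_le_mul_of_nonneg_left ?_ (norm_nonneg _)
                calc ‖φ y - φ x‖ ≤ ‖φ y‖ + ‖φ x‖ := norm_sub_le _ _
                  _ ≤ M + M := add_le_add (hM y) (hM x)
                  _ = 2 * M := by ring
        calc |⟪y - x, φ y - φ x⟫| / ‖y - x‖ ^ ((n:ℝ) + α + 1)
            ≤ ‖y - x‖ * (2 * M) / ‖y - x‖ ^ ((n:ℝ) + α + 1) := (div_le_div_iff_of_pos_right hd).mpr hnum
          _ = 2 * M * ‖y - x‖ ^ (-((n:ℝ) + α)) := by
              rw [mul_comm (‖y - x‖) (2 * M), mul_div_assoc]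
              congr 1
              rw [show -((n:ℝ) + α) = (1:ℝ) - ((n:ℝ) + α + 1) by ring,
                Real.rpow_sub hz0, Real.rpow_one]
  -- measurability of the integrand
  have hmeas : ∀ x : En n, AEStronglyMeasurable
      (fun y : En n => ⟪y - x, φ y - φ x⟫ / ‖y - x‖ ^ ((n:ℝ) + α + 1)) volume := by
    intro x
    have hnum : Continuous fun y : En n => ⟪y - x, φ y - φ x⟫ :=
      (continuous_id.sub continuous_const).inner (hK.continuous.sub continuous_const)
    have hden : Continuous fun y : En n => ‖y - x‖ ^ ((n:ℝ) + α + 1) :=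
      ((continuous_id.sub continuous_const).norm).rpow_const fun y => Or.inr (by positivity)
    exact (hnum.measurable.div hden.measurable).aestronglyMeasurable
  have hInt : ∀ x : En n, Integrable
      (fun y : En n => ⟪y - x, φ y - φ x⟫ / ‖y - x‖ ^ ((n:ℝ) + α + 1)) := by
    intro x
    refine (htrans x).mono' (hmeas x) (ae_of_all _ fun y => ?_)
    rw [Real.norm_eq_abs]
    exact hb x y
  refine ⟨hInt, fun x => ?_⟩
  -- the main estimate
  have hω : (volume (ball (0 : En n) 1)).toReal = omegan n := by
    haveI : Nonempty (Fin n) := ⟨⟨0, hn⟩⟩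
    rw [EuclideanSpace.volume_ball]
    simp only [ENNReal.ofReal_one, one_pow, one_mul, Fintype.card_fin]
    have g1 : 0 < Real.Gamma ((n : ℝ) / 2 + 1) := Real.Gamma_pos_of_pos (by positivity)
    rw [ENNReal.toReal_ofReal (by positivity)]
    unfold omegan
    congr 1
    rw [Real.sqrt_eq_rpow, ← Real.rpow_natCast (Real.pi ^ ((1:ℝ)/2)) n,
      ← Real.rpow_mul Real.pi_pos.le]
    congr 1
    ring
  have step1 : |fracDiv n α φ x| ≤ mun n α * ((n : ℝ) * omegan n *
      ((K:ℝ) * (r ^ (1 - α) / (1 - α)) + 2 * M * (r ^ (-α) / α))) := by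
    rw [fracDiv, abs_mul, abs_of_nonneg hmun]
    refine mul_le_mul_of_nonneg_left ?_ hmun
    have habs := norm_integral_le_integral_norm (μ := volume)
      (fun y : En n => ⟪y - x, φ y - φ x⟫ / ‖y - x‖ ^ ((n : ℝ) + α + 1))
    simp only [Real.norm_eq_abs] at habs
    calc |∫ y : En n, ⟪y - x, φ y - φ x⟫ / ‖y - x‖ ^ ((n : ℝ) + α + 1)|
        ≤ ∫ y : En n, |⟪y - x, φ y - φ x⟫ / ‖y - x‖ ^ ((n : ℝ) + α + 1)| := habs
      _ ≤ ∫ y : En n, f ‖y - x‖ :=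
          integral_mono (hInt x).abs (htrans x) fun y => hb x y
      _ = ∫ z : En n, f ‖z‖ := by
          simp only [sub_eq_add_neg]
          exact integral_add_right_eq_self (fun z : En n => f ‖z‖) (-x)
      _ = (n : ℝ) * (volume (ball (0 : En n) 1)).toReal *
            ∫ y in Set.Ioi (0:ℝ), f y * y ^ (n - 1) := integral_comp_norm_aux hn f
      _ = (n : ℝ) * omegan n *
            ((K:ℝ) * (r ^ (1 - α) / (1 - α)) + 2 * M * (r ^ (-α) / α)) := by
          rw [hω, hval]
  refine step1.trans_eq ?_
  -- final arithmetic
  have h2M : (0:ℝ) < 2 * M := by positivity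
  have hrpow : ∀ s : ℝ, r ^ s = (2 * M) ^ s * (K:ℝ) ^ (-s) := by
    intro s
    rw [hr_def, Real.div_rpow h2M.le (NNReal.coe_nonneg K),
      Real.rpow_neg (NNReal.coe_nonneg K), div_eq_mul_inv]
  have hKr : (K:ℝ) * r ^ (1 - α) = 2 ^ (1 - α) * M ^ (1 - α) * (K:ℝ) ^ α := by
    rw [hrpow, show -(1 - α) = α - 1 by ring]
    have hKK : (K:ℝ) * (K:ℝ) ^ (α - 1) = (K:ℝ) ^ α := by
      nth_rewrite 1 [← Real.rpow_one (K:ℝ)]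
      rw [← Real.rpow_add hKpos]
      norm_num
    rw [mul_left_comm, hKK, Real.mul_rpow (by norm_num) hM0]
  have hMr : 2 * M * r ^ (-α) = 2 ^ (1 - α) * M ^ (1 - α) * (K:ℝ) ^ α := by
    rw [hrpow, neg_neg]
    have hMM : (2 * M) * (2 * M) ^ (-α) = (2 * M) ^ (1 - α) := by
      nth_rewrite 1 [← Real.rpow_one (2 * M)]
      rw [← Real.rpow_add h2M]
      congr 1
      try ring
    rw [← mul_assoc, hMM, Real.mul_rpow (by norm_num) hM0]
  have hsum : (K:ℝ) * (r ^ (1 - α) / (1 - α)) + 2 * M * (r ^ (-α) / α)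
      = 2 ^ (1 - α) * M ^ (1 - α) * (K:ℝ) ^ α / (1 - α)
        + 2 ^ (1 - α) * M ^ (1 - α) * (K:ℝ) ^ α / α := by
    rw [show (K:ℝ) * (r ^ (1 - α) / (1 - α)) = ((K:ℝ) * r ^ (1 - α)) / (1 - α) by ring,
      show 2 * M * (r ^ (-α) / α) = (2 * M * r ^ (-α)) / α by ring, hKr, hMr]
  rw [hsum]
  have hα0' : α ≠ 0 := hα0.ne'
  have hα1' : (1:ℝ) - α ≠ 0 := by linarith
  field_simp
  ring

end StmtOne
end
end

section
/- Let n ≥ 1, α ∈ (0,1) and f ∈ W^{α,1}(ℝ^n). Then ‖∇^α f‖_{L^1(ℝ^n;ℝ^n)} ≤ μ_{n,α} [f]_{W^{α,1}(ℝ^n)}, and equality holds if and only if f = 0 almost everywhere in ℝ^n. -/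
open MeasureTheory Real Filter Topology Metric
open scoped ENNReal NNReal RealInnerProductSpace

noncomputable section

/-! ### Auxiliary definitions and lemmas -/

/-- The vector-valued kernel of the fractional gradient. -/
private def gker (n : ℕ) (α : ℝ) (f : En n → ℝ) (x y : En n) : En n :=
  ((f y - f x) / ‖y - x‖ ^ ((n : ℝ) + α + 1)) • (y - x)

/-- The scalar kernel of the fractional seminorm. -/
private def Fker (n : ℕ) (α : ℝ) (f : En n → ℝ) (x y : En n) : ℝ :=
  |f y - f x| / ‖y - x‖ ^ ((n : ℝ) + α)

private lemma mun_pos {n : ℕ} {α : ℝ} (hα0 : 0 < α) (hα1 : α < 1) : 0 < mun n α := by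
  have hn0 : (0:ℝ) ≤ (n:ℝ) := Nat.cast_nonneg n
  have h1 : (0:ℝ) < (2:ℝ) ^ α := Real.rpow_pos_of_pos (by norm_num) α
  have h2 : (0:ℝ) < Real.pi ^ (-(n : ℝ) / 2) := Real.rpow_pos_of_pos Real.pi_pos _
  have h3 : 0 < Real.Gamma (((n:ℝ) + α + 1) / 2) :=
    Real.Gamma_pos_of_pos (by linarith)
  have h4 : 0 < Real.Gamma ((1 - α) / 2) := Real.Gamma_pos_of_pos (by linarith)
  unfold mun
  exact div_pos (mul_pos (mul_pos h1 h2) h3) h4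

private lemma norm_gker {n : ℕ} {α : ℝ} (hα0 : 0 < α) (f : En n → ℝ) (x y : En n) :
    ‖gker n α f x y‖ = Fker n α f x y := by
  rcases eq_or_ne y x with rfl | hyx
  · simp [gker, Fker, sub_self]
  · have hr : (0:ℝ) < ‖y - x‖ := by rw [norm_pos_iff]; exact sub_ne_zero.2 hyx
    have hP : (0:ℝ) < ‖y - x‖ ^ ((n : ℝ) + α) := Real.rpow_pos_of_pos hr _
    simp only [gker, Fker]
    rw [norm_smul, Real.norm_eq_abs, abs_div,
      abs_of_nonneg (Real.rpow_nonneg hr.le _), Real.rpow_add hr, Real.rpow_one]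
    field_simp

private lemma scale_up {n : ℕ} {α : ℝ} (hα0 : 0 < α) (f : En n → ℝ) (x y e : En n)
    (h : gker n α f x y = ‖gker n α f x y‖ • e) :
    (f y - f x) • (y - x) = (|f y - f x| * ‖y - x‖) • e := by
  rcases eq_or_ne y x with rfl | hyx
  · simp
  · have hr : (0:ℝ) < ‖y - x‖ := by rw [norm_pos_iff]; exact sub_ne_zero.2 hyx
    have hP : (0:ℝ) < ‖y - x‖ ^ ((n : ℝ) + α) := Real.rpow_pos_of_pos hr _
    have hP1 : (0:ℝ) < ‖y - x‖ ^ ((n : ℝ) + α + 1) := Real.rpow_pos_of_pos hr _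
    rw [norm_gker hα0] at h
    have h2 := congrArg (fun v : En n => (‖y - x‖ ^ ((n : ℝ) + α + 1)) • v) h
    simp only [gker, Fker, smul_smul] at h2
    have e1 : ‖y - x‖ ^ ((n : ℝ) + α + 1) * ((f y - f x) / ‖y - x‖ ^ ((n : ℝ) + α + 1))
        = f y - f x := by field_simp
    have e2 : ‖y - x‖ ^ ((n : ℝ) + α + 1) * (|f y - f x| / ‖y - x‖ ^ ((n : ℝ) + α))
        = |f y - f x| * ‖y - x‖ := by
      rw [Real.rpow_add hr, Real.rpow_one]; field_simp
    rwa [e1, e2] at h2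

/-- Equality in the triangle inequality for integrals forces alignment a.e. -/
private lemma align {A : Type*} {mA : MeasurableSpace A} {μ : Measure A}
    {X : Type*} [NormedAddCommGroup X] [InnerProductSpace ℝ X] [CompleteSpace X]
    {G : A → X} (hG : Integrable G μ) (h : ‖∫ a, G a ∂μ‖ = ∫ a, ‖G a‖ ∂μ) :
    ∃ e : X, ∀ᵐ a ∂μ, G a = ‖G a‖ • e := by
  rcases eq_or_ne (∫ a, G a ∂μ) 0 with hv | hv
  · refine ⟨0, ?_⟩
    have h0 : ∫ a, ‖G a‖ ∂μ = 0 := by rw [← h, hv, norm_zero]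
    have hz := (integral_eq_zero_iff_of_nonneg_ae
      (Eventually.of_forall fun a => norm_nonneg (G a)) hG.norm).mp h0
    filter_upwards [hz] with a ha
    have h1 : ‖G a‖ = 0 := by simpa using ha
    simp [norm_eq_zero.mp h1]
  · set v := ∫ a, G a ∂μ with hvdef
    have he : ‖‖v‖⁻¹ • v‖ = 1 := norm_smul_inv_norm hv
    set e : X := ‖v‖⁻¹ • v with hedef
    refine ⟨e, ?_⟩
    have hinn : Integrable (fun a => ⟪e, G a⟫) μ := by
      have := ContinuousLinearMap.integrable_comp (innerSL ℝ e) hG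
      simpa using this
    have hle : ∀ a, ⟪e, G a⟫ ≤ ‖G a‖ := fun a =>
      (real_inner_le_norm e (G a)).trans (by rw [he, one_mul])
    have hsub : Integrable (fun a => ‖G a‖ - ⟪e, G a⟫) μ := hG.norm.sub hinn
    have hev : ⟪e, v⟫ = ‖v‖ := by
      rw [hedef, real_inner_smul_left, real_inner_self_eq_norm_mul_norm,
        ← mul_assoc, inv_mul_cancel₀ (norm_ne_zero_iff.2 hv), one_mul]
    have hzero : ∫ a, (‖G a‖ - ⟪e, G a⟫) ∂μ = 0 := by
      rw [integral_sub hG.norm hinn, integral_inner hG e, ← hvdef, hev, ← h, sub_self]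
    have hz := (integral_eq_zero_iff_of_nonneg_ae
      (Eventually.of_forall fun a => sub_nonneg.2 (hle a)) hsub).mp hzero
    filter_upwards [hz] with a ha
    have h1 : ⟪e, G a⟫ = ‖e‖ * ‖G a‖ := by
      have h2 : ‖G a‖ - ⟪e, G a⟫ = 0 := by simpa using ha
      rw [he, one_mul]; linarith
    have h2 := inner_eq_norm_mul_iff_real.mp h1
    rw [he, one_smul] at h2
    exact h2.symm

/-- In dimension at least 2, alignment of all increments forces `f` to be a.e. constant. -/
private lemma const_of_dim2 {n : ℕ} (hn : 2 ≤ n) {f : En n → ℝ} {x : En n} {e : En n}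
    (h : ∀ᵐ y, (f y - f x) • (y - x) = (|f y - f x| * ‖y - x‖) • e) :
    ∀ᵐ y, f y = f x := by
  haveI : Nonempty (Fin n) := ⟨⟨0, by omega⟩⟩
  have hS : Submodule.span ℝ ({e} : Set (En n)) ≠ ⊤ := by
    intro htop
    rcases eq_or_ne e 0 with rfl | he0
    · rw [Submodule.span_zero_singleton] at htop
      exact absurd htop bot_ne_top
    · have h1 : Module.finrank ℝ (Submodule.span ℝ ({e} : Set (En n))) = 1 :=
        finrank_span_singleton he0
      rw [htop, finrank_top] at h1
      rw [finrank_euclideanSpace_fin] at h1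
      omega
  have hline : volume {y : En n | y - x ∈ Submodule.span ℝ ({e} : Set (En n))} = 0 := by
    have hset : {y : En n | y - x ∈ Submodule.span ℝ ({e} : Set (En n))}
        = (fun y : En n => y + (-x)) ⁻¹' (Submodule.span ℝ ({e} : Set (En n)) : Set (En n)) := by
      ext y; simp [sub_eq_add_neg]
    rw [hset, measure_preimage_add_right]
    exact Measure.addHaar_submodule volume _ hS
  filter_upwards [h, measure_eq_zero_iff_ae_notMem.mp hline] with y hy hyl
  by_contra hne
  have hΔ : f y - f x ≠ 0 := sub_ne_zero.2 hne
  apply hyl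
  show y - x ∈ Submodule.span ℝ ({e} : Set (En n))
  have hyx : y - x = ((f y - f x)⁻¹ * (|f y - f x| * ‖y - x‖)) • e := by
    calc y - x = (f y - f x)⁻¹ • ((f y - f x) • (y - x)) := by
          rw [smul_smul, inv_mul_cancel₀ hΔ, one_smul]
      _ = (f y - f x)⁻¹ • ((|f y - f x| * ‖y - x‖) • e) := by rw [hy]
      _ = _ := by rw [smul_smul]
  rw [hyx]
  exact Submodule.smul_mem _ _ (Submodule.mem_span_singleton_self e)

/-! ### One-dimensional auxiliary material -/

/-- The coordinate of a point of `ℝ¹`. -/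
private def t1 (v : En 1) : ℝ := v 0

private lemma t1_mp : MeasurePreserving t1 volume volume := by
  have h1 := EuclideanSpace.volume_preserving_symm_measurableEquiv_toLp (Fin 1)
  have h2 := volume_preserving_funUnique (Fin 1) ℝ
  exact h2.comp h1

private lemma t1_measurable : Measurable t1 := t1_mp.measurable

private lemma En1_norm (v : En 1) : ‖v‖ = |t1 v| := by
  rw [EuclideanSpace.norm_eq]
  simp [t1, Real.sqrt_sq_eq_abs]

private lemma exists_mem_of_measure_pos {X : Type*} [MeasurableSpace X] {μ : Measure X}
    {s : Set X} (hs : 0 < μ s) {P : X → Prop} (h : ∀ᵐ x ∂μ, P x) : ∃ x ∈ s, P x := by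
  by_contra hc
  push_neg at hc
  have hsub : s ⊆ {x | ¬ P x} := fun x hx => hc x hx
  exact hs.ne' (measure_mono_null hsub (ae_iff.mp h))

/-- In dimension 1, alignment around `x` gives the "no strict local extremum" triple property. -/
private lemma triple_of_align {f : En 1 → ℝ} {x e : En 1}
    (h : ∀ᵐ y, (f y - f x) • (y - x) = (|f y - f x| * ‖y - x‖) • e) :
    ∀ᵐ y, ∀ᵐ z, t1 y < t1 x → t1 x < t1 z → 0 ≤ (f x - f y) * (f z - f x) := by
  have hco : ∀ᵐ y, (f y - f x) * (t1 y - t1 x)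
      = (|f y - f x| * |t1 y - t1 x|) * t1 e := by
    filter_upwards [h] with y hy
    have h1 := congrArg t1 hy
    have hnorm : ‖y - x‖ = |t1 y - t1 x| := by
      rw [En1_norm]
      have ht : t1 (y - x) = t1 y - t1 x := rfl
      rw [ht]
    simp only [t1, PiLp.smul_apply, PiLp.sub_apply, smul_eq_mul] at h1
    rw [hnorm] at h1
    simpa [t1, mul_assoc] using h1
  have hpt : volume {y : En 1 | t1 y = t1 x} = 0 := by
    have : {y : En 1 | t1 y = t1 x} = t1 ⁻¹' {t1 x} := rfl
    rw [this, t1_mp.measure_preimage (measurableSet_singleton _).nullMeasurableSet]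
    exact Real.volume_singleton
  rcases eq_or_ne (t1 e) 0 with hc0 | hc0
  · -- constant case
    have hconst : ∀ᵐ y, f y = f x := by
      filter_upwards [hco, measure_eq_zero_iff_ae_notMem.mp hpt] with y hy hyt
      rw [hc0, mul_zero] at hy
      have hty : t1 y - t1 x ≠ 0 := sub_ne_zero.2 hyt
      have := mul_eq_zero.mp hy
      rcases this with h1 | h1
      · exact sub_eq_zero.mp h1
      · exact absurd h1 hty
    filter_upwards [hconst] with y hy
    have hz : ∀ᵐ z, f z = f x := hconst
    filter_upwards [hz] with z hzz
    intro _ _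
    rw [hy, hzz]
    simp
  · set c := t1 e with hcdef
    have hc2 : 0 < c * c := by
      rcases lt_or_gt_of_ne hc0 with h1 | h1
      · exact mul_pos_of_neg_of_neg h1 h1
      · exact mul_pos h1 h1
    have hy' : ∀ᵐ y, t1 y < t1 x → 0 ≤ (f x - f y) * c := by
      filter_upwards [hco] with y hy hlt
      have hd : t1 y - t1 x < 0 := by linarith
      rw [abs_of_neg hd] at hy
      -- hy : (f y - f x) * (t1 y - t1 x) = |f y - f x| * (-(t1 y - t1 x)) * c
      have h1 : (f y - f x) * (t1 y - t1 x) = (-(|f y - f x| * c)) * (t1 y - t1 x) := by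
        rw [hy]; ring
      have h2 : f y - f x = -(|f y - f x| * c) := mul_right_cancel₀ (ne_of_lt hd) h1
      have h4 : f x - f y = |f y - f x| * c := by linarith
      have h3 : (f x - f y) * c = (|f y - f x| * c) * c := by rw [← h4]
      rw [h3]
      nlinarith [abs_nonneg (f y - f x), hc2]
    have hz' : ∀ᵐ z, t1 x < t1 z → 0 ≤ (f z - f x) * c := by
      filter_upwards [hco] with z hz hlt
      have hd : 0 < t1 z - t1 x := by linarith
      rw [abs_of_pos hd] at hz
      have h1 : (f z - f x) * (t1 z - t1 x) = (|f z - f x| * c) * (t1 z - t1 x) := by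
        rw [hz]; ring
      have h2 : f z - f x = |f z - f x| * c := mul_right_cancel₀ (ne_of_gt hd) h1
      have h3 : (f z - f x) * c = (|f z - f x| * c) * c := by rw [← h2]
      rw [h3]
      nlinarith [abs_nonneg (f z - f x), hc2]
    filter_upwards [hy'] with y hyy
    filter_upwards [hz'] with z hzz
    intro h1 h2
    have a1 := hyy h1
    have a2 := hzz h2
    by_contra hP
    push_neg at hP
    have h4 : ((f x - f y) * c) * ((f z - f x) * c) < 0 := by nlinarith
    exact absurd h4 (not_lt.2 (mul_nonneg a1 a2))

/-- The contradiction in dimension 1: integrable + triple property + positive superlevel set. -/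
private lemma n1_contradiction {f : En 1 → ℝ} (hf : Integrable f)
    (hB : ∀ᵐ x, ∀ᵐ y, ∀ᵐ z, t1 y < t1 x → t1 x < t1 z → 0 ≤ (f x - f y) * (f z - f x))
    {δ : ℝ} (hδ : 0 < δ) (hpos : 0 < volume {x | δ ≤ f x}) : False := by
  obtain ⟨M, hM⟩ : ∃ M : ℕ, 0 < volume ({x | δ ≤ f x} ∩ t1 ⁻¹' Set.Icc (-(M:ℝ)) M) := by
    by_contra hc
    push_neg at hc
    have hsub : {x | δ ≤ f x} ⊆
        ⋃ M : ℕ, ({x | δ ≤ f x} ∩ t1 ⁻¹' Set.Icc (-(M:ℝ)) M) := by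
      intro x hx
      obtain ⟨M, hMx⟩ := exists_nat_ge |t1 x|
      refine Set.mem_iUnion.2 ⟨M, hx, ?_, ?_⟩
      · linarith [neg_abs_le (t1 x)]
      · linarith [le_abs_self (t1 x)]
    have h0 := measure_mono_null hsub
      (measure_iUnion_null fun M => nonpos_iff_eq_zero.mp (hc M))
    exact hpos.ne' h0
  have hfin : volume {x : En 1 | δ/2 < f x} < ⊤ := by
    exact hf.measure_gt_lt_top (show (0:ℝ) < δ/2 by linarith)
  have hSup : 0 < volume ({x : En 1 | f x ≤ δ/2} ∩ t1 ⁻¹' Set.Ioi (M:ℝ)) := by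
    by_contra h0
    push_neg at h0
    have h0' := nonpos_iff_eq_zero.mp h0
    have hsub : t1 ⁻¹' Set.Ioi (M:ℝ) ⊆
        ({x : En 1 | f x ≤ δ/2} ∩ t1 ⁻¹' Set.Ioi (M:ℝ)) ∪ {x : En 1 | δ/2 < f x} := by
      intro x hx
      by_cases hfx : f x ≤ δ/2
      · exact Or.inl ⟨hfx, hx⟩
      · exact Or.inr (not_le.mp hfx)
    have h1 : volume (t1 ⁻¹' Set.Ioi (M:ℝ)) = ⊤ := by
      rw [t1_mp.measure_preimage measurableSet_Ioi.nullMeasurableSet, Real.volume_Ioi]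
    have h2 : volume (t1 ⁻¹' Set.Ioi (M:ℝ)) ≤
        volume ({x : En 1 | f x ≤ δ/2} ∩ t1 ⁻¹' Set.Ioi (M:ℝ)) + volume {x : En 1 | δ/2 < f x} :=
      (measure_mono hsub).trans (measure_union_le _ _)
    rw [h1, h0', zero_add] at h2
    exact lt_irrefl _ (lt_of_le_of_lt h2 hfin)
  have hSdown : 0 < volume ({x : En 1 | f x ≤ δ/2} ∩ t1 ⁻¹' Set.Iio (-(M:ℝ))) := by
    by_contra h0
    push_neg at h0
    have h0' := nonpos_iff_eq_zero.mp h0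
    have hsub : t1 ⁻¹' Set.Iio (-(M:ℝ)) ⊆
        ({x : En 1 | f x ≤ δ/2} ∩ t1 ⁻¹' Set.Iio (-(M:ℝ))) ∪ {x : En 1 | δ/2 < f x} := by
      intro x hx
      by_cases hfx : f x ≤ δ/2
      · exact Or.inl ⟨hfx, hx⟩
      · exact Or.inr (not_le.mp hfx)
    have h1 : volume (t1 ⁻¹' Set.Iio (-(M:ℝ))) = ⊤ := by
      rw [t1_mp.measure_preimage measurableSet_Iio.nullMeasurableSet, Real.volume_Iio]
    have h2 : volume (t1 ⁻¹' Set.Iio (-(M:ℝ))) ≤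
        volume ({x : En 1 | f x ≤ δ/2} ∩ t1 ⁻¹' Set.Iio (-(M:ℝ))) + volume {x : En 1 | δ/2 < f x} :=
      (measure_mono hsub).trans (measure_union_le _ _)
    rw [h1, h0', zero_add] at h2
    exact lt_irrefl _ (lt_of_le_of_lt h2 hfin)
  obtain ⟨x₀, hx₀mem, hx₀⟩ := exists_mem_of_measure_pos hM hB
  obtain ⟨y₀, hy₀mem, hy₀⟩ := exists_mem_of_measure_pos hSdown hx₀
  obtain ⟨z₀, hz₀mem, hz₀⟩ := exists_mem_of_measure_pos hSup hy₀
  have h1 : t1 y₀ < t1 x₀ := lt_of_lt_of_le hy₀mem.2 hx₀mem.2.1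
  have h2 : t1 x₀ < t1 z₀ := lt_of_le_of_lt hx₀mem.2.2 hz₀mem.2
  have h3 := hz₀ h1 h2
  have hfx : δ ≤ f x₀ := hx₀mem.1
  have hfy : f y₀ ≤ δ/2 := hy₀mem.1
  have hfz : f z₀ ≤ δ/2 := hz₀mem.1
  nlinarith

/-- A positive level set for `f` or `-f` when `f` is not a.e. zero. -/
private lemma exists_pos_level {X : Type*} [MeasurableSpace X] {μ : Measure X} {f : X → ℝ}
    (h : ¬ f =ᵐ[μ] 0) :
    ∃ δ : ℝ, 0 < δ ∧ (0 < μ {x | δ ≤ f x} ∨ 0 < μ {x | f x ≤ -δ}) := by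
  by_contra hc
  push_neg at hc
  apply h
  rw [EventuallyEq, ae_iff]
  have hsub : {x | ¬ f x = (0 : X → ℝ) x} ⊆
      ⋃ k : ℕ, ({x | 1/((k:ℝ)+1) ≤ f x} ∪ {x | f x ≤ -(1/((k:ℝ)+1))}) := by
    intro x hx
    simp only [Set.mem_setOf_eq, Pi.zero_apply] at hx
    have hfx : 0 < |f x| := abs_pos.2 hx
    obtain ⟨k, hk⟩ := exists_nat_gt (1/|f x|)
    have hk' : 1/((k:ℝ)+1) ≤ |f x| := by
      rw [div_le_iff₀ (by positivity)]
      have h1 : 1/|f x| < (k:ℝ)+1 := lt_of_lt_of_le hk (by linarith)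
      rw [div_lt_iff₀ hfx] at h1
      linarith
    refine Set.mem_iUnion.2 ⟨k, ?_⟩
    rcases le_or_gt 0 (f x) with hpos | hneg
    · left; rw [abs_of_nonneg hpos] at hk'; exact hk'
    · right
      rw [abs_of_neg hneg] at hk'
      simp only [Set.mem_setOf_eq]
      linarith
  refine measure_mono_null hsub (measure_iUnion_null fun k => ?_)
  have hδ := hc (1/((k:ℝ)+1)) (by positivity)
  exact measure_union_null (nonpos_iff_eq_zero.mp hδ.1) (nonpos_iff_eq_zero.mp hδ.2)

private lemma en_nontrivial {n : ℕ} (hn : 1 ≤ n) : Nontrivial (En n) := by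
  refine ⟨0, EuclideanSpace.single (⟨0, hn⟩ : Fin n) 1, fun hcontra => ?_⟩
  have h1 := congrArg (fun v : En n => v (⟨0, hn⟩ : Fin n)) hcontra
  simp [EuclideanSpace.single_apply] at h1

/-- An integrable a.e.-constant function on `ℝ^n`, `n ≥ 1`, vanishes a.e. -/
private lemma ae_zero_of_ae_const {n : ℕ} (hn : 1 ≤ n) {f : En n → ℝ} (hf : Integrable f)
    {c : ℝ} (hc : f =ᵐ[volume] fun _ => c) : f =ᵐ[volume] 0 := by
  haveI : Nonempty (Fin n) := ⟨⟨0, hn⟩⟩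
  haveI : Nontrivial (En n) := en_nontrivial hn
  have h1 : Integrable (fun _ : En n => c) volume := hf.congr hc
  rw [integrable_const_iff] at h1
  rcases h1 with hc0 | hfin
  · filter_upwards [hc] with x hx
    rw [hx, hc0]; rfl
  · exfalso
    have htop := MeasureTheory.measure_univ_of_isAddLeftInvariant (volume : Measure (En n))
    exact measure_ne_top _ _ htop

/-- If `f ∈ W^{α,1}(ℝ^n)` then
`‖∇^α f‖_{L¹} ≤ μ_{n,α} [f]_{W^{α,1}}`, with equality iff `f = 0` a.e. -/
theorem stmt3 (n : ℕ) (hn : 1 ≤ n) (α : ℝ) (hα : α ∈ Set.Ioo (0 : ℝ) 1)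
    (f : En n → ℝ) (hf : Integrable f)
    (hsem : Integrable (fun p : En n × En n =>
      |f p.1 - f p.2| / ‖p.1 - p.2‖ ^ ((n : ℝ) + α))) :
    (∫ x, ‖fracGrad n α f x‖) ≤
      mun n α * ∫ p : En n × En n, |f p.1 - f p.2| / ‖p.1 - p.2‖ ^ ((n : ℝ) + α) ∧
    ((∫ x, ‖fracGrad n α f x‖) =
      mun n α * ∫ p : En n × En n, |f p.1 - f p.2| / ‖p.1 - p.2‖ ^ ((n : ℝ) + α) ↔
        f =ᵐ[volume] 0) := by
  obtain ⟨hα0, hα1⟩ := hα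
  have hmun : 0 < mun n α := mun_pos hα0 hα1
  have hfm : AEStronglyMeasurable f volume := hf.aestronglyMeasurable
  -- identification of the seminorm integrand with `Fker`
  have hHF : ∀ p : En n × En n,
      |f p.1 - f p.2| / ‖p.1 - p.2‖ ^ ((n : ℝ) + α) = Fker n α f p.1 p.2 := by
    intro p
    simp only [Fker]
    rw [abs_sub_comm, norm_sub_rev]
  have hFint : Integrable (fun p : En n × En n => Fker n α f p.1 p.2) (volume.prod volume) :=
    hsem.congr (Eventually.of_forall fun p => hHF p)
  -- measurability of the vector kernel on the product
  have hgm : AEStronglyMeasurable (fun p : En n × En n => gker n α f p.1 p.2)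
      (volume.prod volume) := by
    simp only [gker, div_eq_mul_inv]
    apply AEStronglyMeasurable.fun_smul
    · exact (hfm.comp_snd.sub hfm.comp_fst).mul
        ((((measurable_snd.sub measurable_fst).norm.pow measurable_const).inv).aestronglyMeasurable)
    · exact (measurable_snd.sub measurable_fst).aestronglyMeasurable
  have hgint : Integrable (fun p : En n × En n => gker n α f p.1 p.2) (volume.prod volume) :=
    hFint.mono' hgm (Eventually.of_forall fun p => le_of_eq (norm_gker hα0 f p.1 p.2))
  -- basic identifications
  have hfrac_fun : (fun x => fracGrad n α f x) = fun x => mun n α • ∫ y, gker n α f x y := rfl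
  have hRHS : (∫ p : En n × En n, |f p.1 - f p.2| / ‖p.1 - p.2‖ ^ ((n : ℝ) + α))
      = ∫ x, ∫ y, Fker n α f x y := by
    rw [integral_congr_ae (Eventually.of_forall fun p => hHF p)]
    exact integral_prod _ hFint
  have hptw : ∀ x, ‖fracGrad n α f x‖ ≤ mun n α * ∫ y, Fker n α f x y := by
    intro x
    rw [show fracGrad n α f x = mun n α • ∫ y, gker n α f x y from rfl, norm_smul,
      Real.norm_eq_abs, abs_of_pos hmun]
    have h1 : ‖∫ y, gker n α f x y‖ ≤ ∫ y, ‖gker n α f x y‖ := norm_integral_le_integral_norm _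
    have h2 : (∫ y, ‖gker n α f x y‖) = ∫ y, Fker n α f x y := by
      simp_rw [norm_gker hα0]
    rw [h2] at h1
    exact mul_le_mul_of_nonneg_left h1 hmun.le
  have hdom : Integrable (fun x => mun n α * ∫ y, Fker n α f x y) volume :=
    hFint.integral_prod_left.const_mul _
  have hfracm : AEStronglyMeasurable (fun x => fracGrad n α f x) volume := by
    rw [hfrac_fun]
    exact hgm.integral_prod_right'.fun_const_smul _
  have hL1 : Integrable (fun x => fracGrad n α f x) volume :=
    hdom.mono' hfracm (Eventually.of_forall hptw)
  have hineq : (∫ x, ‖fracGrad n α f x‖) ≤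
      mun n α * ∫ p : En n × En n, |f p.1 - f p.2| / ‖p.1 - p.2‖ ^ ((n : ℝ) + α) := by
    rw [hRHS, ← integral_const_mul]
    exact integral_mono hL1.norm hdom hptw
  refine ⟨hineq, ?_, ?_⟩
  · -- equality ⇒ f = 0 a.e.
    intro heq
    have h0 : ∫ x, (mun n α * (∫ y, Fker n α f x y) - ‖fracGrad n α f x‖) = 0 := by
      rw [integral_sub hdom hL1.norm, integral_const_mul, heq, hRHS, sub_self]
    have hae : ∀ᵐ x, mun n α * (∫ y, Fker n α f x y) - ‖fracGrad n α f x‖ = 0 := by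
      have := (integral_eq_zero_iff_of_nonneg_ae
        (Eventually.of_forall fun x => sub_nonneg.2 (hptw x)) (hdom.sub hL1.norm)).mp h0
      filter_upwards [this] with x hx
      simpa using hx
    have key : ∀ᵐ x, ∃ e : En n, ∀ᵐ y,
        (f y - f x) • (y - x) = (|f y - f x| * ‖y - x‖) • e := by
      filter_upwards [hae, hgint.prod_right_ae] with x hx hgx
      have hgx' : Integrable (fun y => gker n α f x y) volume := hgx
      have h3 : ‖fracGrad n α f x‖ = mun n α * ‖∫ y, gker n α f x y‖ := by
        rw [show fracGrad n α f x = mun n α • ∫ y, gker n α f x y from rfl, norm_smul,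
          Real.norm_eq_abs, abs_of_pos hmun]
      have h4 : mun n α * (∫ y, Fker n α f x y) = mun n α * ‖∫ y, gker n α f x y‖ := by
        rw [← h3]; linarith
      have h5 := mul_left_cancel₀ hmun.ne' h4
      have hnorm : ‖∫ y, gker n α f x y‖ = ∫ y, ‖gker n α f x y‖ := by
        have h2 : (∫ y, ‖gker n α f x y‖) = ∫ y, Fker n α f x y := by
          simp_rw [norm_gker hα0]
        rw [h2, ← h5]
      obtain ⟨e, he⟩ := align hgx' hnorm
      exact ⟨e, by filter_upwards [he] with y hy using scale_up hα0 f x y e hy⟩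
    rcases eq_or_lt_of_le hn with hn1 | hn2
    · -- n = 1
      subst hn1
      by_contra hne
      obtain ⟨δ, hδ, hcase⟩ := exists_pos_level hne
      have hB : ∀ᵐ x, ∀ᵐ y, ∀ᵐ z,
          t1 y < t1 x → t1 x < t1 z → 0 ≤ (f x - f y) * (f z - f x) := by
        filter_upwards [key] with x hx
        obtain ⟨e, he⟩ := hx
        exact triple_of_align he
      rcases hcase with hpos | hneg
      · exact n1_contradiction hf hB hδ hpos
      · have hB' : ∀ᵐ x, ∀ᵐ y, ∀ᵐ z, t1 y < t1 x → t1 x < t1 z →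
            0 ≤ ((-f) x - (-f) y) * ((-f) z - (-f) x) := by
          filter_upwards [hB] with x hx
          filter_upwards [hx] with y hy
          filter_upwards [hy] with z hz
          intro a b
          have h6 := hz a b
          have h7 : ((-f) x - (-f) y) * ((-f) z - (-f) x)
              = (f x - f y) * (f z - f x) := by simp; ring
          rw [h7]
          exact h6
        have hset : {x : En 1 | δ ≤ (-f) x} = {x : En 1 | f x ≤ -δ} := by
          ext x; simp only [Set.mem_setOf_eq, Pi.neg_apply]; constructor <;> intro <;> linarith
        exact n1_contradiction hf.neg hB' hδ (by rw [hset]; exact hneg)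
    · -- n ≥ 2
      have hconst : ∀ᵐ x : En n, ∀ᵐ y : En n, f y = f x := by
        filter_upwards [key] with x hx
        obtain ⟨e, he⟩ := hx
        exact const_of_dim2 hn2 he
      haveI : Nonempty (Fin n) := ⟨⟨0, hn⟩⟩
      haveI : Nontrivial (En n) := en_nontrivial hn
      have hvol : (volume : Measure (En n)) Set.univ = ⊤ :=
        MeasureTheory.measure_univ_of_isAddLeftInvariant (volume : Measure (En n))
      haveI : (ae (volume : Measure (En n))).NeBot := by
        rw [MeasureTheory.ae_neBot]
        intro hzero
        rw [hzero] at hvol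
        simp at hvol
      obtain ⟨x₀, hx₀⟩ := hconst.exists
      exact ae_zero_of_ae_const hn hf (hx₀.mono fun y hy => hy)
  · -- f = 0 a.e. ⇒ equality
    intro h0
    have hN : volume {x : En n | ¬ f x = 0} = 0 := by
      have := ae_iff.mp h0
      simpa using this
    have e1 : ∀ᵐ p : En n × En n ∂(volume.prod volume), f p.1 = 0 := by
      rw [ae_iff]
      exact Measure.quasiMeasurePreserving_fst.preimage_null hN
    have e2 : ∀ᵐ p : En n × En n ∂(volume.prod volume), f p.2 = 0 := by
      rw [ae_iff]
      exact Measure.quasiMeasurePreserving_snd.preimage_null hN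
    have hRHS0 : (∫ p : En n × En n, |f p.1 - f p.2| / ‖p.1 - p.2‖ ^ ((n : ℝ) + α)) = 0 := by
      rw [integral_congr_ae (g := fun _ => (0:ℝ))
        (by filter_upwards [e1, e2] with p h1 h2; simp [h1, h2])]
      simp
    have efrac : ∀ᵐ x, fracGrad n α f x = 0 := by
      filter_upwards [h0] with x hx
      rw [show fracGrad n α f x = mun n α • ∫ y, gker n α f x y from rfl]
      have hz : (fun y => gker n α f x y) =ᵐ[volume] fun _ => (0 : En n) := by
        filter_upwards [h0] with y hy
        simp only [gker, hy, hx, Pi.zero_apply, sub_zero, sub_self, zero_div, zero_smul]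
      rw [integral_congr_ae hz, integral_zero, smul_zero]
    have hLHS0 : (∫ x, ‖fracGrad n α f x‖) = 0 := by
      rw [integral_congr_ae (g := fun _ => (0:ℝ))
        (by filter_upwards [efrac] with x hx; rw [hx, norm_zero])]
      simp
    rw [hLHS0, hRHS0, mul_zero]
end
end

section
/- Let n ≥ 1 and let μ be a finite ℝ^n-valued Radon measure on ℝ^n. For α ∈ (0,1), define the Riesz potential I_α μ(x) := (μ_{n,1−α}/(n−α)) ∫_{ℝ^n} |x−y|^{α−n} dμ(y), which is defined for a.e. x ∈ ℝ^n and locally integrable. Then (I_α μ) ℒ^n ⇀ μ weakly* as α → 0^+, i.e., lim_{α→0^+} ∫_{ℝ^n} φ(x)·I_α μ(x) dx = ∫_{ℝ^n} φ · dμ for every φ ∈ C^0_c(ℝ^n;ℝ^n). -/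
open MeasureTheory Real Filter Topology Metric
open scoped ENNReal NNReal RealInnerProductSpace

noncomputable section

section AuxStmt11
open Metric Set
open scoped ENNReal NNReal

/-- auxiliary regularized constant -/
def gfun (n : ℕ) (α : ℝ) : ℝ :=
  (2:ℝ) ^ (1 - α) * Real.pi ^ (-(n : ℝ) / 2) * Real.Gamma (((n:ℝ) + 2 - α) / 2) /
    (2 * Real.Gamma (α / 2 + 1) * ((n:ℝ) - α))

lemma mun_eq_gfun (n : ℕ) (hn : 1 ≤ n) {α : ℝ} (hα : 0 < α) (hα1 : α < 1) :
    mun n (1 - α) / ((n:ℝ) - α) = α * gfun n α := by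
  have hn1 : (1:ℝ) ≤ n := by exact_mod_cast hn
  have hg2 : Real.Gamma (α/2) > 0 := Real.Gamma_pos_of_pos (by linarith)
  have hg3 : Real.Gamma (α/2 + 1) > 0 := Real.Gamma_pos_of_pos (by linarith)
  have hrec : Real.Gamma (α/2 + 1) = (α/2) * Real.Gamma (α/2) := Real.Gamma_add_one (by linarith)
  have h1 : ((n:ℝ) + (1 - α) + 1) / 2 = ((n:ℝ) + 2 - α) / 2 := by ring
  have h2 : (1 - (1 - α)) / 2 = α / 2 := by ring
  have h5 : (n:ℝ) - α ≠ 0 := by linarith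
  have h6 : Real.Gamma (α/2) ≠ 0 := hg2.ne'
  have h7 : α ≠ 0 := hα.ne'
  rw [mun, h1, h2, gfun, hrec]
  field_simp

lemma gfun_tendsto (n : ℕ) (hn : 1 ≤ n) :
    Tendsto (gfun n) (𝓝 0) (𝓝 (gfun n 0)) := by
  have hn1 : (1:ℝ) ≤ n := by exact_mod_cast hn
  apply ContinuousAt.tendsto
  unfold gfun
  have hΓ : ∀ s : ℝ, 0 < s → ContinuousAt Real.Gamma s := by
    intro s hs
    refine (Real.differentiableAt_Gamma fun m => ?_).continuousAt
    have : -(m:ℝ) ≤ 0 := neg_nonpos.mpr (Nat.cast_nonneg m)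
    linarith
  apply ContinuousAt.div
  · apply ContinuousAt.mul
    · apply ContinuousAt.mul
      · exact (continuousAt_const_rpow (by norm_num : (2:ℝ) ≠ 0)).comp
          ((continuous_const.sub continuous_id).continuousAt)
      · exact continuousAt_const
    · exact (hΓ _ (by norm_num; linarith)).comp
        (ContinuousAt.div_const (by fun_prop) 2)
  · apply ContinuousAt.mul
    · apply ContinuousAt.mul continuousAt_const
      exact (hΓ _ (by norm_num)).comp (by fun_prop)
    · exact continuous_const.sub continuous_id |>.continuousAt
  · have h3 : Real.Gamma ((0:ℝ)/2 + 1) = 1 := by norm_num [Real.Gamma_one]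
    rw [h3]
    simp only [sub_zero]
    positivity
  
lemma gfun_pos (n : ℕ) (hn : 1 ≤ n) {α : ℝ} (hα : 0 ≤ α) (hα1 : α < 1) : 0 < gfun n α := by
  have hn1 : (1:ℝ) ≤ n := by exact_mod_cast hn
  unfold gfun
  have h1 : 0 < Real.Gamma (((n:ℝ) + 2 - α) / 2) := Real.Gamma_pos_of_pos (by linarith)
  have h2 : 0 < Real.Gamma (α / 2 + 1) := Real.Gamma_pos_of_pos (by linarith)
  have h3 : 0 < Real.pi ^ (-(n:ℝ)/2) := Real.rpow_pos_of_pos Real.pi_pos _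
  have h4 : 0 < (2:ℝ) ^ (1 - α) := Real.rpow_pos_of_pos (by norm_num) _
  have h5 : (0:ℝ) < (n:ℝ) - α := by linarith
  positivity

lemma gfun_zero_mul (n : ℕ) (hn : 1 ≤ n) :
    gfun n 0 * ((n:ℝ) * (volume (ball (0 : En n) 1)).toReal) = 1 := by
  have hn1 : (1:ℝ) ≤ n := by exact_mod_cast hn
  have hΓpos : 0 < Real.Gamma ((n:ℝ)/2 + 1) := Real.Gamma_pos_of_pos (by linarith)
  have hvol : (volume (ball (0 : En n) 1)).toReal
      = Real.pi ^ ((n:ℝ)/2) / Real.Gamma ((n:ℝ)/2 + 1) := by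
    haveI : Nonempty (Fin n) := ⟨⟨0, hn⟩⟩
    rw [EuclideanSpace.volume_ball]
    simp only [Fintype.card_fin]
    rw [ENNReal.ofReal_one, one_pow, one_mul,
      ENNReal.toReal_ofReal (div_nonneg (by positivity) hΓpos.le)]
    congr 1
    rw [← Real.rpow_natCast (Real.sqrt Real.pi) n, Real.sqrt_eq_rpow,
      ← Real.rpow_mul Real.pi_pos.le]
    congr 1
    ring
  rw [hvol]
  unfold gfun
  rw [show ((0:ℝ)/2 + 1) = 1 by norm_num, Real.Gamma_one]
  rw [show ((n:ℝ) + 2 - 0)/2 = (n:ℝ)/2 + 1 by ring]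
  rw [show (1:ℝ) - 0 = 1 by ring, Real.rpow_one]
  have hπ : Real.pi ^ (-(n:ℝ)/2) * Real.pi ^ ((n:ℝ)/2) = 1 := by
    rw [← Real.rpow_add Real.pi_pos, neg_div, neg_add_cancel, Real.rpow_zero]
  have hn0 : (n:ℝ) ≠ 0 := by linarith
  field_simp
  have hπ' : Real.pi ^ ((n:ℝ) * (-1/2)) * Real.pi ^ ((n:ℝ) * (1/2)) = 1 := by
    rw [← Real.rpow_add Real.pi_pos, show (n:ℝ)*(-1/2)+(n:ℝ)*(1/2) = 0 by ring, Real.rpow_zero]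
  rw [← neg_div, mul_assoc, hπ]
  ring


lemma ball_integral (n : ℕ) (hn : 1 ≤ n) {α : ℝ} (hα : 0 < α) (δ : ℝ) (hδ : 0 < δ) :
    ∫ x : En n in ball 0 δ, ‖x‖ ^ (α - n) =
      n * (volume (ball (0 : En n) 1)).toReal * (δ ^ α / α) := by
  haveI : Nontrivial (En n) := by
    refine Module.nontrivial_of_finrank_pos (R := ℝ) ?_
    simp [finrank_euclideanSpace]; omega
  have hdim : Module.finrank ℝ (En n) = n := by simp [finrank_euclideanSpace]
  set f : ℝ → ℝ := (Iio δ).indicator (fun r => r ^ (α - n)) with hf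
  have h1 : ∫ x : En n in ball 0 δ, ‖x‖ ^ (α - n) = ∫ x : En n, f ‖x‖ := by
    rw [← integral_indicator measurableSet_ball]
    congr 1; ext x
    by_cases hx : x ∈ ball (0 : En n) δ
    · rw [Set.indicator_of_mem hx, hf, Set.indicator_of_mem]
      simpa [mem_ball_zero_iff] using hx
    · rw [Set.indicator_of_notMem hx, hf, Set.indicator_of_notMem]
      simpa [mem_ball_zero_iff] using hx
  rw [h1, integral_fun_norm_addHaar volume f, hdim]
  rw [nsmul_eq_mul, smul_eq_mul, mul_assoc]
  congr 1
  congr 1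
  have h2 : ∫ y in Ioi (0:ℝ), y ^ (n-1) • f y = ∫ y in Ioo (0:ℝ) δ, y ^ (α - 1) := by
    have heq : (fun y : ℝ => y ^ (n-1) • f y)
        = (Iio δ).indicator (fun y : ℝ => y ^ (n-1) * y ^ (α - n)) := by
      ext y
      by_cases hy : y ∈ Iio δ
      · simp [hf, Set.indicator_of_mem hy]
      · simp [hf, Set.indicator_of_notMem hy]
    rw [heq, setIntegral_indicator (measurableSet_Iio (a := δ)),
      show Ioi 0 ∩ Iio δ = Ioo 0 δ from rfl]
    apply setIntegral_congr_fun measurableSet_Ioo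
    intro y hy
    have hy0 : (0:ℝ) < y := hy.1
    show y ^ (n - 1) * y ^ (α - n) = y ^ (α - 1)
    rw [← Real.rpow_natCast y (n-1), ← Real.rpow_add hy0]
    congr 1
    have : ((n - 1 : ℕ) : ℝ) = (n : ℝ) - 1 := by
      push_cast [Nat.cast_sub hn]; ring
    rw [this]; ring
  have h3 : ∫ y in Ioo (0:ℝ) δ, y ^ (α - 1) = δ ^ α / α := by
    rw [← integral_Ioc_eq_integral_Ioo, ← intervalIntegral.integral_of_le hδ.le,
      integral_rpow (Or.inl (by linarith))]
    rw [Real.zero_rpow (by linarith : α - 1 + 1 ≠ 0)]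
    ring_nf
  rw [h2, h3]

lemma integrableOn_kernel_ball (n : ℕ) (hn : 1 ≤ n) {α : ℝ} (hα : 0 < α) (hαn : α < n)
    (δ : ℝ) :
    IntegrableOn (fun x : En n => ‖x‖ ^ (α - n)) (ball 0 δ) volume := by
  have hc : α - (n:ℝ) < 0 := by
    have : (1:ℝ) ≤ n := by exact_mod_cast hn
    linarith
  have hc' : (α - (n:ℝ)) ≠ 0 := ne_of_lt hc
  constructor
  · apply Measurable.aestronglyMeasurable
    fun_prop
  · rw [hasFiniteIntegral_iff_norm]
    have hnn : ∀ x : En n, (0:ℝ) ≤ ‖x‖ ^ (α - n) := fun x => Real.rpow_nonneg (norm_nonneg x) _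
    have heq : ∀ x : En n, ENNReal.ofReal ‖(‖x‖ ^ (α - (n:ℝ)))‖ = ENNReal.ofReal (‖x‖ ^ (α - (n:ℝ))) := by
      intro x; rw [Real.norm_of_nonneg (hnn x)]
    simp only [heq]
    rw [lintegral_eq_lintegral_meas_le _ (Eventually.of_forall hnn) (by fun_prop)]
    set μ := volume.restrict (ball (0 : En n) δ) with hμ
    calc
      ∫⁻ t in Ioi (0:ℝ), μ {a : En n | t ≤ ‖a‖ ^ (α - n)}
          ≤ ∫⁻ t in Ioc (0:ℝ) 1 ∪ Ioi 1, μ {a : En n | t ≤ ‖a‖ ^ (α - n)} :=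
        lintegral_mono_set Ioi_subset_Ioc_union_Ioi
      _ ≤ (∫⁻ t in Ioc (0:ℝ) 1, μ {a : En n | t ≤ ‖a‖ ^ (α - n)})
          + ∫⁻ t in Ioi (1:ℝ), μ {a : En n | t ≤ ‖a‖ ^ (α - n)} := lintegral_union_le _ _ _
      _ < ∞ := ENNReal.add_lt_top.2 ⟨?_, ?_⟩
    · calc
        ∫⁻ t in Ioc (0:ℝ) 1, μ {a : En n | t ≤ ‖a‖ ^ (α - n)}
            ≤ ∫⁻ _ in Ioc (0:ℝ) 1, volume (ball (0 : En n) δ) := by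
          apply lintegral_mono
          intro t
          exact (measure_mono (subset_univ _)).trans_eq (Measure.restrict_apply_univ _)
        _ = volume (ball (0 : En n) δ) * volume (Ioc (0:ℝ) 1) := by
          rw [lintegral_const, Measure.restrict_apply_univ]
        _ < ∞ := ENNReal.mul_lt_top measure_ball_lt_top (by simp)
    · have hsub : ∀ t : ℝ, 1 < t →
          μ {a : En n | t ≤ ‖a‖ ^ (α - n)} ≤
            ENNReal.ofReal (t ^ ((n:ℝ) * (α - n)⁻¹)) * volume (ball (0 : En n) 1) := by
        intro t ht
        have ht0 : (0:ℝ) < t := lt_trans one_pos ht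
        have h1 : {a : En n | t ≤ ‖a‖ ^ (α - n)} ⊆ closedBall (0 : En n) (t ^ (α - n)⁻¹) := by
          intro a ha
          simp only [mem_setOf_eq] at ha
          rw [mem_closedBall_zero_iff]
          rcases eq_or_lt_of_le (norm_nonneg a) with h0 | h0
          · rw [← h0]; positivity
          · have := Real.rpow_le_rpow_of_nonpos ht0 ha (le_of_lt (inv_neg''.2 hc))
            rwa [← Real.rpow_mul (norm_nonneg a), mul_inv_cancel₀ hc', Real.rpow_one] at this
        calc μ {a : En n | t ≤ ‖a‖ ^ (α - n)}
            ≤ volume (closedBall (0 : En n) (t ^ (α - n)⁻¹)) :=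
              le_trans (Measure.restrict_apply_le _ _) (measure_mono h1)
          _ = ENNReal.ofReal ((t ^ (α - n)⁻¹) ^ (Module.finrank ℝ (En n))) *
              volume (ball (0 : En n) 1) := Measure.addHaar_closedBall _ _ (by positivity)
          _ = ENNReal.ofReal (t ^ ((n:ℝ) * (α - n)⁻¹)) * volume (ball (0 : En n) 1) := by
            congr 2
            rw [← Real.rpow_natCast (t ^ (α - n)⁻¹) _, ← Real.rpow_mul ht0.le]
            congr 1
            simp [finrank_euclideanSpace, mul_comm]
      have hexp : (n:ℝ) * (α - n)⁻¹ < -1 := by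
        have h0 : (0:ℝ) < (n:ℝ) - α := by linarith
        have h1 : (α - (n:ℝ))⁻¹ = -(((n:ℝ) - α)⁻¹) := by
          rw [show α - (n:ℝ) = -((n:ℝ) - α) by ring, inv_neg]
        rw [h1, mul_neg, neg_lt_neg_iff, ← div_eq_mul_inv, one_lt_div h0]
        have : (1:ℝ) ≤ n := by exact_mod_cast hn
        linarith
      calc
        ∫⁻ t in Ioi (1:ℝ), μ {a : En n | t ≤ ‖a‖ ^ (α - n)}
            ≤ ∫⁻ t in Ioi (1:ℝ), ENNReal.ofReal (t ^ ((n:ℝ) * (α - n)⁻¹)) *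
              volume (ball (0 : En n) 1) := by
          apply setLIntegral_mono' measurableSet_Ioi
          intro t ht
          exact hsub t ht
        _ = (∫⁻ t in Ioi (1:ℝ), ENNReal.ofReal (t ^ ((n:ℝ) * (α - n)⁻¹))) *
            volume (ball (0 : En n) 1) := lintegral_mul_const' _ _ measure_ball_lt_top.ne
        _ < ∞ := by
          apply ENNReal.mul_lt_top _ measure_ball_lt_top
          have hint := (integrableOn_Ioi_rpow_of_lt hexp one_pos).hasFiniteIntegral
          rw [hasFiniteIntegral_iff_norm] at hint
          refine lt_of_le_of_lt (lintegral_mono fun t => ?_) hint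
          exact ENNReal.ofReal_le_ofReal (le_abs_self _)

lemma indicator_kernel_eq (n : ℕ) (α : ℝ) (y : En n) (δ : ℝ) (x : En n) :
    (ball y δ).indicator (fun x : En n => ‖x - y‖ ^ (α - n)) x
      = (ball (0:En n) δ).indicator (fun z : En n => ‖z‖ ^ (α - n)) (x - y) := by
  by_cases hx : x ∈ ball y δ
  · rw [indicator_of_mem hx, indicator_of_mem]
    rw [mem_ball_zero_iff]
    rw [mem_ball, dist_eq_norm] at hx
    exact hx
  · rw [indicator_of_notMem hx, indicator_of_notMem]
    rw [mem_ball_zero_iff]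
    rw [mem_ball, dist_eq_norm] at hx
    exact hx

lemma integrableOn_kernel_ball' (n : ℕ) (hn : 1 ≤ n) {α : ℝ} (hα : 0 < α) (hαn : α < n)
    (y : En n) (δ : ℝ) :
    IntegrableOn (fun x : En n => ‖x - y‖ ^ (α - n)) (ball y δ) volume := by
  have key : Integrable ((ball y δ).indicator (fun x : En n => ‖x - y‖ ^ (α - n))) volume := by
    have heq : (ball y δ).indicator (fun x : En n => ‖x - y‖ ^ (α - n))
        = fun x => (ball (0:En n) δ).indicator (fun z : En n => ‖z‖ ^ (α - n)) (x - y) := by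
      ext x; exact indicator_kernel_eq n α y δ x
    rw [heq]
    exact ((integrable_indicator_iff measurableSet_ball).2
      (integrableOn_kernel_ball n hn hα hαn δ)).comp_sub_right y
  exact (integrable_indicator_iff measurableSet_ball).1 key

lemma ball_integral' (n : ℕ) (hn : 1 ≤ n) {α : ℝ} (hα : 0 < α) (y : En n) (δ : ℝ) (hδ : 0 < δ) :
    ∫ x : En n in ball y δ, ‖x - y‖ ^ (α - n) =
      n * (volume (ball (0 : En n) 1)).toReal * (δ ^ α / α) := by
  rw [← integral_indicator measurableSet_ball]
  calc ∫ x : En n, (ball y δ).indicator (fun x : En n => ‖x - y‖ ^ (α - n)) x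
      = ∫ x : En n, (ball (0:En n) δ).indicator (fun z : En n => ‖z‖ ^ (α - n)) (x - y) := by
        congr 1; ext x; exact indicator_kernel_eq n α y δ x
    _ = ∫ z : En n, (ball (0:En n) δ).indicator (fun z : En n => ‖z‖ ^ (α - n)) z :=
        integral_sub_right_eq_self _ y
    _ = n * (volume (ball (0 : En n) 1)).toReal * (δ ^ α / α) := by
        rw [integral_indicator measurableSet_ball]; exact ball_integral n hn hα δ hδ

lemma integrableOn_kernel_set (n : ℕ) (hn : 1 ≤ n) {α : ℝ} (hα : 0 < α) (hαn : α < n)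
    (y : En n) {S : Set (En n)} (hS : MeasurableSet S) (hfin : volume S < ∞) :
    IntegrableOn (fun x : En n => ‖x - y‖ ^ (α - n)) S volume := by
  have hsplit : S = (S ∩ ball y 1) ∪ (S \ ball y 1) := (inter_union_diff S _).symm
  rw [hsplit]
  apply IntegrableOn.union
  · exact (integrableOn_kernel_ball' n hn hα hαn y 1).mono_set inter_subset_right
  · apply Measure.integrableOn_of_bounded
    · exact ((measure_mono diff_subset).trans_lt hfin).ne
    · apply Measurable.aestronglyMeasurable; fun_prop
    · filter_upwards [ae_restrict_mem (hS.diff measurableSet_ball)] with x hx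
      rw [Real.norm_of_nonneg (Real.rpow_nonneg (norm_nonneg _) _)]
      apply Real.rpow_le_one_of_one_le_of_nonpos
      · rw [mem_diff, mem_ball, dist_eq_norm, not_lt] at hx
        exact hx.2
      · have : (1:ℝ) ≤ n := by exact_mod_cast hn
        linarith

lemma kernel_setIntegral_le (n : ℕ) (hn : 1 ≤ n) {α : ℝ} (hα : 0 < α) (hαn : α < n)
    (y : En n) {S : Set (En n)} (hS : MeasurableSet S) (hfin : volume S < ∞) :
    ∫ x in S, ‖x - y‖ ^ (α - (n:ℝ)) ≤
      n * (volume (ball (0 : En n) 1)).toReal / α + (volume S).toReal := by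
  have hint := integrableOn_kernel_set n hn hα hαn y hS hfin
  have h1 : ∫ x in S, ‖x - y‖ ^ (α - (n:ℝ)) =
      (∫ x in S ∩ ball y 1, ‖x - y‖ ^ (α - (n:ℝ))) +
      ∫ x in S \ ball y 1, ‖x - y‖ ^ (α - (n:ℝ)) := by
    rw [← setIntegral_union (disjoint_sdiff_self_right.mono_left inter_subset_right)
      (hS.diff measurableSet_ball)
      (hint.mono_set inter_subset_left) (hint.mono_set diff_subset),
      inter_union_diff]
  rw [h1]
  have h2 : (∫ x in S ∩ ball y 1, ‖x - y‖ ^ (α - (n:ℝ))) ≤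
      ∫ x in ball y 1, ‖x - y‖ ^ (α - (n:ℝ)) := by
    apply setIntegral_mono_set (integrableOn_kernel_ball' n hn hα hαn y 1)
    · filter_upwards with x using Real.rpow_nonneg (norm_nonneg _) _
    · exact HasSubset.Subset.eventuallyLE inter_subset_right
  have h3 : ∫ x in ball y 1, ‖x - y‖ ^ (α - (n:ℝ)) =
      n * (volume (ball (0 : En n) 1)).toReal / α := by
    rw [ball_integral' n hn hα y 1 one_pos, Real.one_rpow]
    ring
  have h4 : ∫ x in S \ ball y 1, ‖x - y‖ ^ (α - (n:ℝ)) ≤ (volume S).toReal := by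
    calc ∫ x in S \ ball y 1, ‖x - y‖ ^ (α - (n:ℝ))
        ≤ ∫ _ in S \ ball y 1, (1:ℝ) := by
          apply setIntegral_mono_on (hint.mono_set diff_subset)
            (integrableOn_const ((measure_mono diff_subset).trans_lt hfin).ne)
            (hS.diff measurableSet_ball)
          intro x hx
          apply Real.rpow_le_one_of_one_le_of_nonpos
          · rw [mem_diff, mem_ball, dist_eq_norm, not_lt] at hx
            exact hx.2
          · have : (1:ℝ) ≤ n := by exact_mod_cast hn
            linarith
      _ = (volume (S \ ball y 1)).toReal := by rw [setIntegral_const, smul_eq_mul, mul_one, measureReal_def]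
      _ ≤ (volume S).toReal := by
          apply ENNReal.toReal_mono hfin.ne (measure_mono diff_subset)
  linarith [h2, h3.le, h4]

variable {n : ℕ}

lemma kernel_smul_integrable (n : ℕ) (hn : 1 ≤ n) {α : ℝ} (hα : 0 < α) (hαn : α < n)
    {φ : En n → En n} (hφ : Continuous φ) (hφc : HasCompactSupport φ)
    {M : ℝ} (hM : ∀ x, ‖φ x‖ ≤ M) (y : En n) :
    Integrable (fun x : En n => (‖x - y‖ ^ (α - (n:ℝ))) • φ x) volume := by
  have hKm : MeasurableSet (tsupport φ) := (isClosed_tsupport φ).measurableSet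
  have hKfin : volume (tsupport φ) < ∞ := hφc.measure_lt_top
  have heq : (fun x : En n => (‖x - y‖ ^ (α - (n:ℝ))) • φ x)
      = (tsupport φ).indicator (fun x : En n => (‖x - y‖ ^ (α - (n:ℝ))) • φ x) := by
    ext x
    by_cases hx : x ∈ tsupport φ
    · rw [indicator_of_mem hx]
    · rw [indicator_of_notMem hx, image_eq_zero_of_notMem_tsupport hx, smul_zero]
  rw [heq, integrable_indicator_iff hKm]
  apply Integrable.mono' ((integrableOn_kernel_set n hn hα hαn y hKm hKfin).mul_const M)
  · exact ((by fun_prop : Measurable fun x : En n => ‖x - y‖ ^ (α - (n:ℝ)))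
      |>.aestronglyMeasurable).smul hφ.aestronglyMeasurable
  · filter_upwards with x
    rw [norm_smul, Real.norm_of_nonneg (Real.rpow_nonneg (norm_nonneg _) _)]
    exact mul_le_mul_of_nonneg_left (hM x) (Real.rpow_nonneg (norm_nonneg _) _)

lemma psi_tendsto (hn : 1 ≤ n) {φ : En n → En n} (hφ : Continuous φ)
    (hφc : HasCompactSupport φ) (y : En n) :
    Tendsto (fun α : ℝ => (mun n (1 - α) / ((n : ℝ) - α)) •
        ∫ x, (‖x - y‖ ^ (α - (n:ℝ))) • φ x) (𝓝[>] (0:ℝ)) (𝓝 (φ y)) := by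
  have hn1 : (1:ℝ) ≤ n := by exact_mod_cast hn
  obtain ⟨M, hM⟩ := hφc.exists_bound_of_continuous hφ
  have hM0 : 0 ≤ M := le_trans (norm_nonneg _) (hM 0)
  set K := tsupport φ with hK
  have hKm : MeasurableSet K := (isClosed_tsupport φ).measurableSet
  have hKfin : volume K < ∞ := hφc.measure_lt_top
  set ω := (volume (ball (0 : En n) 1)).toReal with hωdef
  have hω : 0 ≤ ω := ENNReal.toReal_nonneg
  rw [Metric.tendsto_nhds]
  intro ε hε
  -- choose δ
  obtain ⟨δ₀, hδ₀, hδprop⟩ := Metric.continuousAt_iff.1 hφ.continuousAt (ε/2) (by linarith)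
  set δ := min δ₀ 1 with hδdef
  have hδpos : 0 < δ := lt_min hδ₀ one_pos
  have hδ1 : δ ≤ 1 := min_le_right _ _
  have hδball : ∀ x ∈ ball y δ, ‖φ x - φ y‖ ≤ ε/2 := by
    intro x hx
    rw [mem_ball] at hx
    have := hδprop (lt_of_lt_of_le hx (min_le_left _ _))
    rw [dist_eq_norm] at this
    exact this.le
  -- the majorant
  set m : ℝ → ℝ := fun α => gfun n α * ((n:ℝ) * ω) * δ ^ α with hmdef
  have hm : Tendsto m (𝓝[>] (0:ℝ)) (𝓝 1) := by
    have h1 : Tendsto (gfun n) (𝓝[>] (0:ℝ)) (𝓝 (gfun n 0)) :=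
      (gfun_tendsto n hn).mono_left nhdsWithin_le_nhds
    have h2 : Tendsto (fun α : ℝ => δ ^ α) (𝓝[>] (0:ℝ)) (𝓝 1) := by
      have : Tendsto (fun α : ℝ => δ ^ α) (𝓝 (0:ℝ)) (𝓝 (δ ^ (0:ℝ))) :=
        (continuousAt_const_rpow hδpos.ne')
      rw [Real.rpow_zero] at this
      exact this.mono_left nhdsWithin_le_nhds
    have hval : gfun n 0 * ((n:ℝ) * ω) = 1 := gfun_zero_mul n hn
    have := (h1.mul_const ((n:ℝ) * ω)).mul h2
    rw [mul_one, hval] at this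
    exact this
  set B : ℝ → ℝ := fun α => ε/2 * m α + |m α - 1| * ‖φ y‖ +
    (α * gfun n α) * (δ ^ (-(n:ℝ)) * M * (volume K).toReal) with hBdef
  have hB : Tendsto B (𝓝[>] (0:ℝ)) (𝓝 (ε/2)) := by
    have h1 : Tendsto (fun α => ε/2 * m α) (𝓝[>] (0:ℝ)) (𝓝 (ε/2)) := by
      simpa using hm.const_mul (ε/2)
    have h2 : Tendsto (fun α => |m α - 1| * ‖φ y‖) (𝓝[>] (0:ℝ)) (𝓝 0) := by
      have := ((hm.sub_const 1).abs).mul_const ‖φ y‖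
      norm_num at this
      exact this
    have h3 : Tendsto (fun α : ℝ => (α * gfun n α) * (δ ^ (-(n:ℝ)) * M * (volume K).toReal))
        (𝓝[>] (0:ℝ)) (𝓝 0) := by
      have hid : Tendsto (fun α : ℝ => α) (𝓝[>] (0:ℝ)) (𝓝 0) :=
        tendsto_id.mono_left nhdsWithin_le_nhds
      have := (hid.mul ((gfun_tendsto n hn).mono_left nhdsWithin_le_nhds)).mul_const
        (δ ^ (-(n:ℝ)) * M * (volume K).toReal)
      rw [zero_mul, zero_mul] at this
      exact this
    have := (h1.add h2).add h3
    rw [add_zero, add_zero] at this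
    exact this
  have hev : ∀ᶠ α in 𝓝[>] (0:ℝ),
      dist ((mun n (1 - α) / ((n : ℝ) - α)) • ∫ x, (‖x - y‖ ^ (α - (n:ℝ))) • φ x) (φ y) ≤ B α := by
    filter_upwards [Ioo_mem_nhdsGT_of_mem (by constructor <;> norm_num : (0:ℝ) ∈ Ico 0 (1/2))]
      with α hα
    obtain ⟨hα0, hα12⟩ := hα
    have hα1 : α < 1 := by linarith
    have hαn : α < n := by linarith
    set k : En n → ℝ := fun x => ‖x - y‖ ^ (α - (n:ℝ)) with hkdef
    have hknn : ∀ x, 0 ≤ k x := fun x => Real.rpow_nonneg (norm_nonneg _) _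
    set c := mun n (1 - α) / ((n:ℝ) - α) with hcdef
    have hc : c = α * gfun n α := mun_eq_gfun n hn hα0 hα1
    have hcpos : 0 < c := by rw [hc]; exact mul_pos hα0 (gfun_pos n hn hα0.le hα1)
    have hInt : Integrable (fun x : En n => k x • φ x) volume :=
      kernel_smul_integrable n hn hα0 hαn hφ hφc hM y
    have hIball : IntegrableOn k (ball y δ) volume :=
      integrableOn_kernel_ball' n hn hα0 hαn y δ
    have hIball2 : IntegrableOn (fun x : En n => k x • (φ x - φ y)) (ball y δ) volume := by
      apply Integrable.mono' (hIball.mul_const (ε/2))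
      · exact ((by fun_prop : Measurable k).aestronglyMeasurable).smul
          ((hφ.sub continuous_const).aestronglyMeasurable) |>.restrict
      · filter_upwards [ae_restrict_mem measurableSet_ball] with x hx
        rw [norm_smul, Real.norm_of_nonneg (hknn x)]
        exact mul_le_mul_of_nonneg_left (hδball x hx) (hknn x)
    have hsplit : (∫ x, k x • φ x) =
        (∫ x in ball y δ, k x • φ x) + ∫ x in (ball y δ)ᶜ, k x • φ x :=
      (integral_add_compl measurableSet_ball hInt).symm
    have hball : (∫ x in ball y δ, k x • φ x) =
        (∫ x in ball y δ, k x • (φ x - φ y)) + (∫ x in ball y δ, k x) • φ y := by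
      rw [← integral_smul_const]
      rw [← integral_add hIball2 (hIball.smul_const (φ y))]
      congr 1
      funext x
      rw [← smul_add, sub_add_cancel]
    set A := ∫ x in ball y δ, k x • (φ x - φ y) with hA
    set Bb := ∫ x in (ball y δ)ᶜ, k x • φ x with hBb
    set I := ∫ x in ball y δ, k x with hI
    have hIval : I = n * ω * (δ ^ α / α) := ball_integral' n hn hα0 y δ hδpos
    have hcI : c * I = m α := by
      rw [hc, hIval]
      show α * gfun n α * ((n:ℝ) * ω * (δ ^ α / α)) = gfun n α * ((n:ℝ) * ω) * δ ^ α
      rw [mul_comm ((n:ℝ) * ω) (δ ^ α / α), ← mul_assoc, div_eq_mul_inv]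
      rw [show α * gfun n α * (δ ^ α * α⁻¹) = gfun n α * δ ^ α * (α * α⁻¹) by ring,
        mul_inv_cancel₀ hα0.ne', mul_one]
      ring
    have hdecomp : (c • ∫ x, k x • φ x) - φ y = c • A + (c * I - 1) • φ y + c • Bb := by
      rw [hsplit, hball]
      rw [smul_add, smul_add, smul_smul, sub_smul, one_smul]
      abel
    rw [dist_eq_norm]
    show ‖(c • ∫ x, k x • φ x) - φ y‖ ≤ B α
    rw [hdecomp]
    have hT1 : ‖c • A‖ ≤ ε/2 * m α := by
      rw [norm_smul, Real.norm_of_nonneg hcpos.le]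
      have hAle : ‖A‖ ≤ I * (ε/2) := by
        rw [hA, hI]
        calc ‖∫ x in ball y δ, k x • (φ x - φ y)‖
            ≤ ∫ x in ball y δ, k x * (ε/2) := by
              apply norm_integral_le_of_norm_le (hIball.mul_const (ε/2))
              filter_upwards [ae_restrict_mem measurableSet_ball] with x hx
              rw [norm_smul, Real.norm_of_nonneg (hknn x)]
              exact mul_le_mul_of_nonneg_left (hδball x hx) (hknn x)
          _ = (∫ x in ball y δ, k x) * (ε/2) := by rw [integral_mul_const]
      calc c * ‖A‖ ≤ c * (I * (ε/2)) := mul_le_mul_of_nonneg_left hAle hcpos.le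
        _ = ε/2 * (c * I) := by ring
        _ = ε/2 * m α := by rw [hcI]
    have hT2 : ‖(c * I - 1) • φ y‖ ≤ |m α - 1| * ‖φ y‖ := by
      rw [norm_smul, Real.norm_eq_abs, hcI]
    have hT3 : ‖c • Bb‖ ≤ (α * gfun n α) * (δ ^ (-(n:ℝ)) * M * (volume K).toReal) := by
      rw [norm_smul, Real.norm_of_nonneg hcpos.le, ← hc]
      have hBble : ‖Bb‖ ≤ δ ^ (-(n:ℝ)) * M * (volume K).toReal := by
        rw [hBb]
        have step1 : ‖∫ x in (ball y δ)ᶜ, k x • φ x‖ ≤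
            ∫ x in (ball y δ)ᶜ, K.indicator (fun _ => δ ^ (α - (n:ℝ)) * M) x := by
          apply norm_integral_le_of_norm_le
          · rw [integrable_indicator_iff hKm]
            exact integrableOn_const ((Measure.restrict_apply_le _ _).trans_lt hKfin).ne
          · filter_upwards [ae_restrict_mem measurableSet_ball.compl] with x hx
            by_cases hxK : x ∈ K
            · rw [indicator_of_mem hxK, norm_smul, Real.norm_of_nonneg (hknn x)]
              apply mul_le_mul (by
                rw [hkdef]
                apply Real.rpow_le_rpow_of_nonpos hδpos
                · rw [mem_compl_iff, mem_ball, dist_eq_norm, not_lt] at hx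
                  exact hx
                · linarith) (hM x) (norm_nonneg _) (by positivity)
            · rw [indicator_of_notMem hxK, image_eq_zero_of_notMem_tsupport hxK,
                smul_zero, norm_zero]
        have step2 : (∫ x in (ball y δ)ᶜ, K.indicator (fun _ => δ ^ (α - (n:ℝ)) * M) x) ≤
            δ ^ (α - (n:ℝ)) * M * (volume K).toReal := by
          rw [setIntegral_indicator hKm, setIntegral_const, smul_eq_mul, measureReal_def]
          rw [mul_comm ((volume ((ball y δ)ᶜ ∩ K)).toReal)]
          apply mul_le_mul_of_nonneg_left _ (by positivity)
          exact ENNReal.toReal_mono hKfin.ne (measure_mono inter_subset_right)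
        have step3 : δ ^ (α - (n:ℝ)) ≤ δ ^ (-(n:ℝ)) :=
          Real.rpow_le_rpow_of_exponent_ge hδpos hδ1 (by linarith)
        calc ‖∫ x in (ball y δ)ᶜ, k x • φ x‖
            ≤ δ ^ (α - (n:ℝ)) * M * (volume K).toReal := le_trans step1 step2
          _ ≤ δ ^ (-(n:ℝ)) * M * (volume K).toReal := by
              apply mul_le_mul_of_nonneg_right _ ENNReal.toReal_nonneg
              exact mul_le_mul_of_nonneg_right step3 hM0
      rw [hc]
      exact mul_le_mul_of_nonneg_left hBble (by rw [← hc]; exact hcpos.le)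
    calc ‖c • A + (c * I - 1) • φ y + c • Bb‖
        ≤ ‖c • A‖ + ‖(c * I - 1) • φ y‖ + ‖c • Bb‖ := norm_add₃_le
      _ ≤ B α := by rw [hBdef]; exact add_le_add (add_le_add hT1 hT2) hT3
  filter_upwards [hev, hB.eventually_lt_const (by linarith : ε/2 < ε)] with α h1 h2
  exact lt_of_le_of_lt h1 h2

/-- If `μ = σ ν` is a finite `ℝ^n`-valued Radon measure (in polar form, `ν`
finite and `‖σ‖ = 1` `ν`-a.e.), then `(I_α μ) ℒ^n ⇀ μ` weakly* as `α → 0⁺`: for every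
continuous compactly supported `φ`,
`∫ φ(x)·I_α μ(x) dx → ∫ φ·dμ`, where
`I_α μ(x) = (μ_{n,1−α}/(n−α)) ∫ |x−y|^{α−n} dμ(y)`. -/
theorem stmt11 (n : ℕ) (hn : 1 ≤ n)
    (ν : Measure (En n)) [IsFiniteMeasure ν] (σ : En n → En n)
    (hσm : AEStronglyMeasurable σ ν) (hσ : ∀ᵐ x ∂ν, ‖σ x‖ = 1)
    (φ : En n → En n) (hφ : Continuous φ) (hφc : HasCompactSupport φ) :
    Tendsto (fun α : ℝ =>
        ∫ x, ⟪φ x, (mun n (1 - α) / ((n : ℝ) - α)) •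
          ∫ y, (‖x - y‖ ^ (α - (n : ℝ))) • σ y ∂ν⟫)
      (𝓝[>] (0 : ℝ)) (𝓝 (∫ x, ⟪φ x, σ x⟫ ∂ν)) := by
  have hn1 : (1:ℝ) ≤ n := by exact_mod_cast hn
  obtain ⟨M, hM⟩ := hφc.exists_bound_of_continuous hφ
  have hM0 : 0 ≤ M := le_trans (norm_nonneg _) (hM 0)
  set K := tsupport φ with hKdef
  have hKm : MeasurableSet K := (isClosed_tsupport φ).measurableSet
  have hKfin : volume K < ∞ := hφc.measure_lt_top
  haveI : IsFiniteMeasure (volume.restrict K : Measure (En n)) :=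
    ⟨by rwa [Measure.restrict_apply_univ]⟩
  set ω := (volume (ball (0 : En n) 1)).toReal with hωdef
  have hω : 0 ≤ ω := ENNReal.toReal_nonneg
  set ψ : ℝ → En n → En n := fun α y => (mun n (1 - α) / ((n : ℝ) - α)) •
      ∫ x, (‖x - y‖ ^ (α - (n:ℝ))) • φ x with hψdef
  -- Step A: eventual equality via Fubini
  have hEq : ∀ᶠ α in 𝓝[>] (0:ℝ),
      (∫ x, ⟪φ x, (mun n (1 - α) / ((n : ℝ) - α)) •
          ∫ y, (‖x - y‖ ^ (α - (n : ℝ))) • σ y ∂ν⟫)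
        = ∫ y, ⟪ψ α y, σ y⟫ ∂ν := by
    filter_upwards [Ioo_mem_nhdsGT_of_mem (by constructor <;> norm_num : (0:ℝ) ∈ Ico 0 1)]
      with α hα
    obtain ⟨hα0, hα1⟩ := hα
    have hαn : α < n := by linarith
    set c := mun n (1 - α) / ((n:ℝ) - α) with hcdef
    have hkmeas : Measurable (fun p : En n × En n => ‖p.1 - p.2‖ ^ (α - (n:ℝ))) := by fun_prop
    have hknn : ∀ p : En n × En n, 0 ≤ ‖p.1 - p.2‖ ^ (α - (n:ℝ)) :=
      fun p => Real.rpow_nonneg (norm_nonneg _) _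
    have hkerAESM : AEStronglyMeasurable
        (fun p : En n × En n => (‖p.1 - p.2‖ ^ (α - (n:ℝ))) * ‖σ p.2‖)
        ((volume.restrict K).prod ν) :=
      hkmeas.aestronglyMeasurable.mul (hσm.norm.comp_snd)
    have hD : ∀ y : En n, (∫ x in K, ‖x - y‖ ^ (α - (n:ℝ))) ≤ n * ω / α + (volume K).toReal :=
      fun y => kernel_setIntegral_le n hn hα0 hαn y hKm hKfin
    have hDnn : ∀ y : En n, 0 ≤ ∫ x in K, ‖x - y‖ ^ (α - (n:ℝ)) :=
      fun y => integral_nonneg (fun x => Real.rpow_nonneg (norm_nonneg _) _)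
    have hKer : Integrable (fun p : En n × En n => (‖p.1 - p.2‖ ^ (α - (n:ℝ))) * ‖σ p.2‖)
        ((volume.restrict K).prod ν) := by
      rw [integrable_prod_iff' hkerAESM]
      constructor
      · filter_upwards with y
        exact (integrableOn_kernel_set n hn hα0 hαn y hKm hKfin).mul_const ‖σ y‖
      · have haesm : AEStronglyMeasurable
            (fun y => ∫ x in K, ‖(‖x - y‖ ^ (α - (n:ℝ))) * ‖σ y‖‖) ν := by
          have hsw : AEStronglyMeasurable
              (fun p : En n × En n => ‖(‖p.2 - p.1‖ ^ (α - (n:ℝ))) * ‖σ p.1‖‖)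
              (ν.prod (volume.restrict K)) := by
            apply AEStronglyMeasurable.norm
            exact (by fun_prop : Measurable (fun p : En n × En n =>
              ‖p.2 - p.1‖ ^ (α - (n:ℝ)))).aestronglyMeasurable.mul (hσm.norm.comp_fst)
          exact hsw.integral_prod_right'
        apply Integrable.mono' (integrable_const (1 * (n * ω / α + (volume K).toReal))) haesm
        filter_upwards [hσ] with y hσy
        rw [Real.norm_of_nonneg (integral_nonneg (fun x => norm_nonneg _))]
        calc ∫ x in K, ‖(‖x - y‖ ^ (α - (n:ℝ))) * ‖σ y‖‖
            = ∫ x in K, (‖x - y‖ ^ (α - (n:ℝ))) * ‖σ y‖ := by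
              congr 1; funext x
              rw [Real.norm_of_nonneg (mul_nonneg (Real.rpow_nonneg (norm_nonneg _) _)
                (norm_nonneg _))]
          _ = (∫ x in K, ‖x - y‖ ^ (α - (n:ℝ))) * ‖σ y‖ := integral_mul_const _ _
          _ ≤ (n * ω / α + (volume K).toReal) * 1 := by
              rw [hσy]
              exact mul_le_mul_of_nonneg_right (hD y) zero_le_one
          _ = 1 * (n * ω / α + (volume K).toReal) := by ring
    have hH : Integrable (fun p : En n × En n => (‖p.1 - p.2‖ ^ (α - (n:ℝ))) • σ p.2)
        ((volume.restrict K).prod ν) := by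
      apply Integrable.mono' hKer (hkmeas.aestronglyMeasurable.smul hσm.comp_snd)
      filter_upwards with p
      show ‖(‖p.1 - p.2‖ ^ (α - (n:ℝ))) • σ p.2‖ ≤ _
      rw [norm_smul, Real.norm_of_nonneg (hknn p)]
    have hG : Integrable (fun p : En n × En n =>
        c * ((‖p.1 - p.2‖ ^ (α - (n:ℝ))) * ⟪φ p.1, σ p.2⟫)) ((volume.restrict K).prod ν) := by
      apply Integrable.mono' ((hKer.const_mul (|c| * M)))
      · apply AEStronglyMeasurable.const_mul
        apply AEStronglyMeasurable.mul hkmeas.aestronglyMeasurable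
        exact (hφ.aestronglyMeasurable.comp_fst).inner hσm.comp_snd
      · filter_upwards with p
        rw [Real.norm_eq_abs, abs_mul, abs_mul]
        rw [show |c| * M * ((‖p.1 - p.2‖ ^ (α - (n:ℝ))) * ‖σ p.2‖)
          = |c| * ((‖p.1 - p.2‖ ^ (α - (n:ℝ))) * (M * ‖σ p.2‖)) by ring]
        apply mul_le_mul_of_nonneg_left _ (abs_nonneg c)
        rw [abs_of_nonneg (hknn p)]
        apply mul_le_mul_of_nonneg_left _ (hknn p)
        calc |⟪φ p.1, σ p.2⟫| ≤ ‖φ p.1‖ * ‖σ p.2‖ := abs_real_inner_le_norm _ _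
          _ ≤ M * ‖σ p.2‖ := mul_le_mul_of_nonneg_right (hM _) (norm_nonneg _)
    -- now the chain of equalities
    have hzero : ∀ x ∉ K,
        ⟪φ x, c • ∫ y, (‖x - y‖ ^ (α - (n:ℝ))) • σ y ∂ν⟫ = 0 := by
      intro x hx
      rw [image_eq_zero_of_notMem_tsupport hx, inner_zero_left]
    rw [← setIntegral_eq_integral_of_forall_compl_eq_zero hzero]
    have hae : ∀ᵐ x ∂(volume.restrict K),
        ⟪φ x, c • ∫ y, (‖x - y‖ ^ (α - (n:ℝ))) • σ y ∂ν⟫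
          = ∫ y, c * ((‖x - y‖ ^ (α - (n:ℝ))) * ⟪φ x, σ y⟫) ∂ν := by
      filter_upwards [hH.prod_right_ae] with x hx
      rw [real_inner_smul_right, ← integral_inner hx (φ x), ← integral_const_mul]
      congr 1; funext y
      rw [real_inner_smul_right]
    rw [integral_congr_ae hae]
    rw [integral_integral_swap (by exact hG)]
    congr 1; funext y
    -- ∫ x in K, c * (k * ⟪φ x, σ y⟫) = ⟪ψ α y, σ y⟫
    have hIntK : Integrable (fun x : En n => (‖x - y‖ ^ (α - (n:ℝ))) • φ x) volume :=
      kernel_smul_integrable n hn hα0 hαn hφ hφc hM y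
    have hfull : ∫ x, (‖x - y‖ ^ (α - (n:ℝ))) • φ x
        = ∫ x in K, (‖x - y‖ ^ (α - (n:ℝ))) • φ x := by
      rw [setIntegral_eq_integral_of_forall_compl_eq_zero]
      intro x hx
      rw [image_eq_zero_of_notMem_tsupport hx, smul_zero]
    rw [hψdef]
    show ∫ x in K, c * ((‖x - y‖ ^ (α - (n:ℝ))) * ⟪φ x, σ y⟫) ∂volume
      = ⟪c • ∫ x, (‖x - y‖ ^ (α - (n:ℝ))) • φ x, σ y⟫
    rw [hfull, real_inner_smul_left]
    rw [real_inner_comm, ← integral_inner hIntK.integrableOn (σ y), ← integral_const_mul]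
    congr 1; funext x
    rw [real_inner_smul_right, real_inner_comm]
  -- Step B: dominated convergence
  set C := M * (|gfun n 0| + 1) * ((n:ℝ) * ω + (volume K).toReal) with hCdef
  have hTend : Tendsto (fun α => ∫ y, ⟪ψ α y, σ y⟫ ∂ν) (𝓝[>] (0:ℝ))
      (𝓝 (∫ y, ⟪φ y, σ y⟫ ∂ν)) := by
    apply tendsto_integral_filter_of_dominated_convergence (fun _ => C)
    · filter_upwards with α
      apply AEStronglyMeasurable.inner _ hσm
      apply AEStronglyMeasurable.const_smul'
      have hjoint : AEStronglyMeasurable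
          (fun p : En n × En n => (‖p.2 - p.1‖ ^ (α - (n:ℝ))) • φ p.2) (ν.prod volume) :=
        (by fun_prop : Measurable (fun p : En n × En n =>
          ‖p.2 - p.1‖ ^ (α - (n:ℝ)))).aestronglyMeasurable.smul
          (hφ.comp continuous_snd).aestronglyMeasurable
      exact hjoint.integral_prod_right'
    · have hg1 : ∀ᶠ α in 𝓝[>] (0:ℝ), |gfun n α| ≤ |gfun n 0| + 1 := by
        have := (gfun_tendsto n hn).mono_left (nhdsWithin_le_nhds (s := Ioi (0:ℝ)))
        filter_upwards [this.eventually (eventually_abs_sub_lt (gfun n 0) one_pos)] with α hα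
        calc |gfun n α| ≤ |gfun n 0| + |gfun n α - gfun n 0| := by
              have := abs_sub_abs_le_abs_sub (gfun n α) (gfun n 0)
              linarith
          _ ≤ |gfun n 0| + 1 := by linarith [hα.le]
      filter_upwards [Ioo_mem_nhdsGT_of_mem (by constructor <;> norm_num : (0:ℝ) ∈ Ico 0 1),
        hg1] with α hα hgα
      obtain ⟨hα0, hα1⟩ := hα
      have hαn : α < n := by linarith
      filter_upwards [hσ] with y hσy
      have hgpos : 0 < gfun n α := gfun_pos n hn hα0.le hα1
      have hψle : ‖ψ α y‖ ≤ C := by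
        rw [hψdef]
        show ‖(mun n (1 - α) / ((n : ℝ) - α)) • ∫ x, (‖x - y‖ ^ (α - (n:ℝ))) • φ x‖ ≤ C
        rw [mun_eq_gfun n hn hα0 hα1, norm_smul,
          Real.norm_of_nonneg (mul_pos hα0 hgpos).le]
        have hfull : ∫ x, (‖x - y‖ ^ (α - (n:ℝ))) • φ x
            = ∫ x in K, (‖x - y‖ ^ (α - (n:ℝ))) • φ x := by
          rw [setIntegral_eq_integral_of_forall_compl_eq_zero]
          intro x hx
          rw [image_eq_zero_of_notMem_tsupport hx, smul_zero]
        rw [hfull]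
        have hIntK : Integrable (fun x : En n => (‖x - y‖ ^ (α - (n:ℝ))) • φ x) volume :=
          kernel_smul_integrable n hn hα0 hαn hφ hφc hM y
        have hn2 : ‖∫ x in K, (‖x - y‖ ^ (α - (n:ℝ))) • φ x‖
            ≤ (n * ω / α + (volume K).toReal) * M := by
          calc ‖∫ x in K, (‖x - y‖ ^ (α - (n:ℝ))) • φ x‖
              ≤ ∫ x in K, (‖x - y‖ ^ (α - (n:ℝ))) * M := by
                apply norm_integral_le_of_norm_le
                  ((integrableOn_kernel_set n hn hα0 hαn y hKm hKfin).mul_const M)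
                filter_upwards with x
                rw [norm_smul, Real.norm_of_nonneg (Real.rpow_nonneg (norm_nonneg _) _)]
                exact mul_le_mul_of_nonneg_left (hM x) (Real.rpow_nonneg (norm_nonneg _) _)
            _ = (∫ x in K, ‖x - y‖ ^ (α - (n:ℝ))) * M := integral_mul_const _ _
            _ ≤ (n * ω / α + (volume K).toReal) * M :=
                mul_le_mul_of_nonneg_right (kernel_setIntegral_le n hn hα0 hαn y hKm hKfin) hM0
        calc α * gfun n α * ‖∫ x in K, (‖x - y‖ ^ (α - (n:ℝ))) • φ x‖
            ≤ α * gfun n α * ((n * ω / α + (volume K).toReal) * M) :=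
              mul_le_mul_of_nonneg_left hn2 (mul_pos hα0 hgpos).le
          _ = M * (gfun n α * (n * ω) + α * gfun n α * (volume K).toReal) := by
              field_simp
          _ ≤ M * ((|gfun n 0| + 1) * (n * ω) + (|gfun n 0| + 1) * (volume K).toReal) := by
              apply mul_le_mul_of_nonneg_left _ hM0
              apply add_le_add
              · apply mul_le_mul_of_nonneg_right _ (by positivity)
                exact le_trans (le_abs_self _) hgα
              · apply mul_le_mul_of_nonneg_right _ ENNReal.toReal_nonneg
                calc α * gfun n α ≤ 1 * gfun n α :=
                      mul_le_mul_of_nonneg_right hα1.le hgpos.le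
                  _ = gfun n α := one_mul _
                  _ ≤ |gfun n 0| + 1 := le_trans (le_abs_self _) hgα
          _ = C := by rw [hCdef]; ring
      calc ‖⟪ψ α y, σ y⟫‖ ≤ ‖ψ α y‖ * ‖σ y‖ := norm_inner_le_norm _ _
        _ = ‖ψ α y‖ := by rw [hσy, mul_one]
        _ ≤ C := hψle
    · exact integrable_const C
    · filter_upwards with y
      exact (psi_tendsto hn hφ hφc y).inner tendsto_const_nhds
  exact hTend.congr' (hEq.mono fun α h => h.symm)

end AuxStmt11
end
end
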